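/- arXiv:1806.07880 — 2 statements merged into one kernel-verified Lean document; each statement's English description precedes it below -/
import Mathlib

section
/- Let F be a continuous function on S^n with ‖F‖₂ ≠ 0 and Fourier coefficients F̂_l^k in the orthonormal hyperspherical-harmonic basis Y_l^k. Then the (unnormalized) center of gravity satisfies ‖F‖₂² · ξ_O(F) = ∑_{l₁,k,l₂,m} conj(F̂_{l₁}^k) F̂_{l₂}^m I(l₁,k,l₂,m), where I(l₁,k,l₂,m) = ∫_{S^n} x · conj(Y_{l₁}^k(x)) Y_{l₂}^m(x) dσ(x) ∈ ℂ^{n+1}, and moreover I(l₁,k,l₂,m) = 0 unless |l₁ - l₂| = 1 together with: there exists ν ∈ {1,…,n} such that m_ι = k_ι ± 1 for all indices ι < ν and m_ι = k_ι for all ι ≥ ν. -/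
open Real MeasureTheory

/-- The Gegenbauer polynomial `C_l^λ(t)` (explicit formula, equivalent to the
generating-function definition `∑ C_l^λ(t) r^l = (1 - 2tr + r²)^(-λ)`). -/
noncomputable def gegenbauer (lam : ℝ) (l : ℕ) (t : ℝ) : ℝ :=
  ∑ k ∈ Finset.range (l / 2 + 1),
    (-1 : ℝ) ^ k * Real.Gamma (lam + l - k) /
      (Real.Gamma lam * (Nat.factorial k) * (Nat.factorial (l - 2 * k))) *
      (2 * t) ^ (l - 2 * k)

noncomputable def gco (lam : ℝ) (l k : ℕ) : ℝ :=
  (-1 : ℝ) ^ k * Real.Gamma (lam + l - k) /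
      (Real.Gamma lam * (Nat.factorial k) * (Nat.factorial (l - 2 * k)))

lemma gegenbauer_eq (lam : ℝ) (l : ℕ) (t : ℝ) :
    gegenbauer lam l t = ∑ k ∈ Finset.range (l / 2 + 1), gco lam l k * (2 * t) ^ (l - 2 * k) :=
  rfl

noncomputable def gegD (lam : ℝ) (l : ℕ) (t : ℝ) : ℝ :=
  ∑ k ∈ Finset.range (l / 2 + 1),
    gco lam l k * (((l - 2 * k : ℕ) : ℝ) * (2 * t) ^ (l - 2 * k - 1) * 2)

noncomputable def gegDD (lam : ℝ) (l : ℕ) (t : ℝ) : ℝ :=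
  ∑ k ∈ Finset.range (l / 2 + 1),
    gco lam l k * (((l - 2 * k : ℕ) : ℝ) *
      (((l - 2 * k - 1 : ℕ) : ℝ) * (2 * t) ^ (l - 2 * k - 2) * 2) * 2)

lemma hasDerivAt_gegenbauer (lam : ℝ) (l : ℕ) (t : ℝ) :
    HasDerivAt (gegenbauer lam l) (gegD lam l t) t := by
  have : HasDerivAt (fun t : ℝ => ∑ k ∈ Finset.range (l / 2 + 1), gco lam l k * (2 * t) ^ (l - 2 * k))
      (gegD lam l t) t := by
    apply HasDerivAt.fun_sum
    intro k _
    have h1 : HasDerivAt (fun t : ℝ => 2 * t) 2 t := by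
      simpa using (hasDerivAt_id t).const_mul (2:ℝ)
    have h2 := (h1.pow (l - 2 * k)).const_mul (gco lam l k)
    simpa using h2
  exact this

lemma hasDerivAt_gegD (lam : ℝ) (l : ℕ) (t : ℝ) :
    HasDerivAt (gegD lam l) (gegDD lam l t) t := by
  apply HasDerivAt.fun_sum
  intro k _
  have h1 : HasDerivAt (fun t : ℝ => 2 * t) 2 t := by
    simpa using (hasDerivAt_id t).const_mul (2:ℝ)
  have h2 := (h1.fun_pow (l - 2 * k - 1)).const_mul
      (gco lam l k * ((l - 2 * k : ℕ) : ℝ) * 2)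
  have e : l - 2 * k - 1 - 1 = l - 2 * k - 2 := by omega
  convert h2 using 1
  · rfl
  · funext x; ring
  · rw [e]; ring

lemma continuous_gegenbauer (lam : ℝ) (l : ℕ) : Continuous (gegenbauer lam l) := by
  unfold gegenbauer
  exact continuous_finset_sum _ fun k _ => by fun_prop

lemma continuous_gegD (lam : ℝ) (l : ℕ) : Continuous (gegD lam l) := by
  unfold gegD
  exact continuous_finset_sum _ fun k _ => by fun_prop

lemma continuous_gegDD (lam : ℝ) (l : ℕ) : Continuous (gegDD lam l) := by
  unfold gegDD
  exact continuous_finset_sum _ fun k _ => by fun_prop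

lemma gco_rec (M a k : ℕ) (hM : 1 ≤ M) (hk : k < a / 2) :
    gco ((M : ℝ)/2) a k * (4 * ((a - 2*k : ℕ) : ℝ) * ((a - 2*k - 1 : ℕ) : ℝ))
      + gco ((M : ℝ)/2) a (k+1) * (2*((k:ℝ)+1)*(2*(a:ℝ)-2*k-2+M)) = 0 := by
  have hak : 2 * k + 2 ≤ a := by omega
  set lam : ℝ := (M : ℝ)/2 with hlam
  have hlampos : 0 < lam := by positivity
  have hx : lam + (a:ℝ) - ((k:ℕ):ℝ) - 1 > 0 := by
    have : (2*k + 2 : ℝ) ≤ (a : ℝ) := by exact_mod_cast hak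
    nlinarith
  have hGam : Real.Gamma (lam + a - k) = (lam + a - k - 1) * Real.Gamma (lam + a - k - 1) := by
    have h := Real.Gamma_add_one (ne_of_gt hx)
    have h2 : lam + (a:ℝ) - k - 1 + 1 = lam + a - k := by ring
    rw [h2] at h
    rw [h]
  have hshift : lam + (a:ℝ) - ((k+1 : ℕ):ℝ) = lam + a - k - 1 := by push_cast; ring
  unfold gco
  rw [hshift, hGam]
  have hfac1 : ((Nat.factorial (k+1) : ℕ) : ℝ) = ((k:ℝ)+1) * (Nat.factorial k : ℕ) := by
    rw [Nat.factorial_succ]; push_cast; ring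
  have hu : a - 2*k = (a - 2*(k+1)) + 2 := by omega
  have hfac2 : ((Nat.factorial (a - 2*k) : ℕ) : ℝ)
      = ((a - 2*k : ℕ):ℝ) * ((a - 2*k - 1 : ℕ):ℝ) * (Nat.factorial (a - 2*(k+1)) : ℕ) := by
    rw [hu]
    rw [Nat.factorial_succ, Nat.factorial_succ]
    have e1 : a - 2*(k+1) + 1 + 1 = a - 2*k := by omega
    have e2 : a - 2*(k+1) + 1 = a - 2*k - 1 := by omega
    rw [e1, e2]
    push_cast; ring
  rw [hfac1, hfac2]
  have hG0 : Real.Gamma lam ≠ 0 := ne_of_gt (Real.Gamma_pos_of_pos hlampos)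
  have hG1 : Real.Gamma (lam + a - k - 1) ≠ 0 := ne_of_gt (Real.Gamma_pos_of_pos hx)
  have hf0 : ((Nat.factorial k : ℕ) : ℝ) ≠ 0 := by positivity
  have hf1 : ((Nat.factorial (a - 2*(k+1)) : ℕ) : ℝ) ≠ 0 := by positivity
  have hc1 : ((a - 2*k : ℕ) : ℝ) = (a:ℝ) - 2*k := by
    rw [Nat.cast_sub (by omega)]; push_cast; ring
  have hc2 : ((a - 2*k - 1 : ℕ) : ℝ) = (a:ℝ) - 2*k - 1 := by
    have h' : a - 2*k - 1 = a - (2*k+1) := by omega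
    rw [h', Nat.cast_sub (by omega)]; push_cast; ring
  have hlamMsub : 2*(a:ℝ) - 2*(k:ℝ) - 2 + (M:ℝ) = 2 * (lam + a - k - 1) := by
    rw [hlam]; ring
  rw [hc1, hc2, hlamMsub, pow_succ]
  have hne1 : (a:ℝ) - 2*(k:ℝ) ≠ 0 := by
    have : (2*k + 2 : ℝ) ≤ (a : ℝ) := by exact_mod_cast hak
    nlinarith
  have hne2 : (a:ℝ) - 2*(k:ℝ) - 1 ≠ 0 := by
    have : (2*k + 2 : ℝ) ≤ (a : ℝ) := by exact_mod_cast hak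
    nlinarith
  have hk1 : (k:ℝ) + 1 ≠ 0 := by positivity
  rw [div_mul_eq_mul_div, div_mul_eq_mul_div,
    div_add_div _ _ (mul_ne_zero (mul_ne_zero hG0 hf0) (mul_ne_zero (mul_ne_zero hne1 hne2) hf1))
      (mul_ne_zero (mul_ne_zero hG0 (mul_ne_zero hk1 hf0)) hf1), div_eq_zero_iff]
  left
  ring

lemma geg_ode (M a : ℕ) (hM : 1 ≤ M) (t : ℝ) :
    (1 - t^2) * gegDD ((M:ℝ)/2) a t - ((M:ℝ)+1) * t * gegD ((M:ℝ)/2) a t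
      + (a:ℝ)*((a:ℝ)+(M:ℝ)) * gegenbauer ((M:ℝ)/2) a t = 0 := by
  set lam : ℝ := (M:ℝ)/2 with hlam
  unfold gegDD gegD
  rw [gegenbauer_eq]
  rw [Finset.mul_sum, Finset.mul_sum, Finset.mul_sum, ← Finset.sum_sub_distrib,
    ← Finset.sum_add_distrib]
  have key : ∀ k ∈ Finset.range (a/2+1),
      (1 - t^2) * (gco lam a k * (((a - 2*k : ℕ):ℝ) * (((a-2*k-1 : ℕ):ℝ) * (2*t)^(a-2*k-2) * 2) * 2))
        - ((M:ℝ)+1)*t*(gco lam a k * (((a-2*k : ℕ):ℝ) * (2*t)^(a-2*k-1) * 2))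
        + (a:ℝ)*((a:ℝ)+(M:ℝ))*(gco lam a k * (2*t)^(a-2*k))
      = gco lam a k * (4*((a-2*k : ℕ):ℝ)*((a-2*k-1 : ℕ):ℝ)) * (2*t)^(a-2*k-2)
        + gco lam a k * (2*(k:ℝ)*(2*(a:ℝ)-2*(k:ℝ)+(M:ℝ))) * (2*t)^(a-2*k) := by
    intro k hk
    have hk' : 2*k ≤ a := by
      have := Finset.mem_range.mp hk; omega
    set u := a - 2*k with hu
    clear_value u
    have hku : 2*k + u = a := by omega
    have hac : (a:ℝ) = 2*(k:ℝ) + (u:ℝ) := by exact_mod_cast congrArg (Nat.cast (R := ℝ)) hku.symm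
    rcases Nat.lt_or_ge u 2 with h2 | h2
    · interval_cases u
      · simp only [Nat.cast_zero, Nat.zero_sub, pow_zero]
        rw [hac]; push_cast; ring
      · simp only [Nat.cast_one]
        norm_num
        rw [hac]; push_cast; ring
    · obtain ⟨v, rfl⟩ : ∃ v, u = v + 2 := ⟨u - 2, by omega⟩
      have e1 : v + 2 - 1 = v + 1 := by omega
      have e2 : v + 2 - 2 = v := by omega
      rw [e1, e2]
      rw [hac]; push_cast; ring
  rw [Finset.sum_congr rfl key, Finset.sum_add_distrib, Finset.sum_range_succ,
    Finset.sum_range_succ']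
  have hA : gco lam a (a/2) * (4*((a - 2*(a/2) : ℕ):ℝ)*((a-2*(a/2)-1 : ℕ):ℝ)) * (2*t)^(a-2*(a/2)-2) = 0 := by
    have hnn : (a - 2*(a/2)) * (a - 2*(a/2) - 1) = 0 := by
      rcases (by omega : a - 2*(a/2) = 0 ∨ a - 2*(a/2) = 1) with h | h <;> rw [h] <;> simp
    have : ((a - 2*(a/2) : ℕ):ℝ) * ((a - 2*(a/2) - 1 : ℕ):ℝ) = 0 := by exact_mod_cast hnn
    rcases mul_eq_zero.mp this with h | h <;> rw [h] <;> ring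
  have hB : gco lam a 0 * (2*((0:ℕ):ℝ)*(2*(a:ℝ)-2*((0:ℕ):ℝ)+(M:ℝ))) * (2*t)^(a-2*0) = 0 := by
    norm_num
  rw [hA, hB, add_zero, add_zero]
  rw [← Finset.sum_add_distrib]
  apply Finset.sum_eq_zero
  intro k hk
  have hklt : k < a/2 := Finset.mem_range.mp hk
  have hrec := gco_rec M a k hM hklt
  have epow : a - 2*(k+1) = a - 2*k - 2 := by omega
  have ecoef : (2*((k+1:ℕ):ℝ)*(2*(a:ℝ)-2*((k+1:ℕ):ℝ)+(M:ℝ)))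
      = (2*((k:ℝ)+1)*(2*(a:ℝ)-2*(k:ℝ)-2+(M:ℝ))) := by push_cast; ring
  rw [epow, ecoef]
  have : gco lam a k * (4*((a-2*k : ℕ):ℝ)*((a-2*k-1 : ℕ):ℝ))
      + gco lam a (k+1) * (2*((k:ℝ)+1)*(2*(a:ℝ)-2*(k:ℝ)-2+(M:ℝ))) = 0 := hrec
  calc gco lam a k * (4*((a-2*k : ℕ):ℝ)*((a-2*k-1 : ℕ):ℝ)) * (2*t)^(a-2*k-2)
        + gco lam a (k+1) * (2*((k:ℝ)+1)*(2*(a:ℝ)-2*(k:ℝ)-2+(M:ℝ))) * (2*t)^(a-2*k-2)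
      = (gco lam a k * (4*((a-2*k : ℕ):ℝ)*((a-2*k-1 : ℕ):ℝ))
          + gco lam a (k+1) * (2*((k:ℝ)+1)*(2*(a:ℝ)-2*(k:ℝ)-2+(M:ℝ)))) * (2*t)^(a-2*k-2) := by ring
    _ = 0 := by rw [this]; ring

attribute [fun_prop] continuous_gegenbauer continuous_gegD continuous_gegDD

lemma SL_main (M a : ℕ) (hM : 1 ≤ M) (m : ℕ) :
    (a:ℝ)*((a:ℝ)+(M:ℝ)) *
      (∫ θ in (0:ℝ)..π, Real.cos θ ^ m * gegenbauer ((M:ℝ)/2) a (Real.cos θ) * Real.sin θ ^ M)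
    = -∫ θ in (0:ℝ)..π,
        ((m:ℝ)*((m-1:ℕ):ℝ) * Real.cos θ ^ (m-2) * Real.sin θ ^ (M+2)
          - (m:ℝ)*((M:ℝ)+1) * Real.cos θ ^ m * Real.sin θ ^ M)
          * gegenbauer ((M:ℝ)/2) a (Real.cos θ) := by
  set lam : ℝ := (M:ℝ)/2 with hlam
  set y : ℝ → ℝ := fun θ => gegenbauer lam a (Real.cos θ) with hy'
  set yd : ℝ → ℝ := fun θ => -Real.sin θ * gegD lam a (Real.cos θ) with hyd'
  set u : ℝ → ℝ := fun θ => -(Real.sin θ ^ (M+1) * gegD lam a (Real.cos θ)) with hu'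
  set ud : ℝ → ℝ := fun θ => -((a:ℝ)*((a:ℝ)+(M:ℝ))) * (Real.sin θ ^ M * gegenbauer lam a (Real.cos θ)) with hud'
  set q : ℝ → ℝ := fun θ => Real.cos θ ^ m with hq'
  set qd : ℝ → ℝ := fun θ => (m:ℝ) * Real.cos θ ^ (m-1) * (-Real.sin θ) with hqd'
  set v : ℝ → ℝ := fun θ => -((m:ℝ) * Real.cos θ ^ (m-1) * Real.sin θ ^ (M+1)) with hv'
  set vd : ℝ → ℝ := fun θ => (m:ℝ)*((m-1:ℕ):ℝ) * Real.cos θ ^ (m-2) * Real.sin θ ^ (M+2)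
      - (m:ℝ)*((M:ℝ)+1) * Real.cos θ ^ m * Real.sin θ ^ M with hvd'
  have hy : ∀ θ : ℝ, HasDerivAt y (yd θ) θ := by
    intro θ
    have h := (hasDerivAt_gegenbauer lam a (Real.cos θ)).comp θ (Real.hasDerivAt_cos θ)
    simpa [hy', hyd', mul_comm, Function.comp_def] using h
  have hu : ∀ θ : ℝ, HasDerivAt u (ud θ) θ := by
    intro θ
    have h1 : HasDerivAt (fun θ : ℝ => Real.sin θ ^ (M+1))
        (((M+1:ℕ):ℝ) * Real.sin θ ^ M * Real.cos θ) θ := by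
      simpa using (Real.hasDerivAt_sin θ).fun_pow (M+1)
    have h2 : HasDerivAt (fun θ : ℝ => gegD lam a (Real.cos θ))
        (gegDD lam a (Real.cos θ) * -Real.sin θ) θ :=
      (hasDerivAt_gegD lam a (Real.cos θ)).comp θ (Real.hasDerivAt_cos θ)
    have h3 := (h1.mul h2).neg
    refine h3.congr_deriv ?_
    symm
    have hode := geg_ode M a hM (Real.cos θ)
    have hs2 : Real.sin θ ^ 2 = 1 - Real.cos θ ^ 2 := Real.sin_sq θ
    simp only [hud', hlam]
    push_cast
    linear_combination (-(Real.sin θ ^ M)) * hode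
      - (Real.sin θ ^ M * gegDD ((M:ℝ)/2) a (Real.cos θ)) * hs2
  have hq : ∀ θ : ℝ, HasDerivAt q (qd θ) θ := fun θ => (Real.hasDerivAt_cos θ).pow m
  have hv : ∀ θ : ℝ, HasDerivAt v (vd θ) θ := by
    intro θ
    rcases Nat.eq_zero_or_pos m with hm0 | hmpos
    · subst hm0
      have : HasDerivAt (fun _ : ℝ => (0:ℝ)) 0 θ := hasDerivAt_const θ 0
      convert this using 1
      · funext x; simp [hv']
      · simp [hvd']
    · obtain ⟨m', rfl⟩ : ∃ m', m = m' + 1 := ⟨m - 1, by omega⟩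
      have hc : HasDerivAt (fun θ : ℝ => Real.cos θ ^ m')
          ((m':ℝ) * Real.cos θ ^ (m'-1) * (-Real.sin θ)) θ := (Real.hasDerivAt_cos θ).pow m'
      have hs : HasDerivAt (fun θ : ℝ => Real.sin θ ^ (M+1))
          (((M+1:ℕ):ℝ) * Real.sin θ ^ M * Real.cos θ) θ := by
        simpa using (Real.hasDerivAt_sin θ).fun_pow (M+1)
      have h3 := ((hc.const_mul (((m'+1:ℕ)):ℝ)).mul hs).neg
      have hval : vd θ = -(((m'+1:ℕ):ℝ) * ((m':ℝ) * Real.cos θ ^ (m'-1) * (-Real.sin θ)) * Real.sin θ ^ (M+1)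
          + ((m'+1:ℕ):ℝ) * Real.cos θ ^ m' * (((M+1:ℕ):ℝ) * Real.sin θ ^ M * Real.cos θ)) := by
        simp only [hvd']
        have e : m' + 1 - 2 = m' - 1 := by omega
        rw [e, Nat.add_sub_cancel]
        push_cast
        ring
      rw [hval]
      exact h3
  have cy : Continuous y := by fun_prop
  have cyd : Continuous yd := by fun_prop
  have cu : Continuous u := by fun_prop
  have cud : Continuous ud := by fun_prop
  have cq : Continuous q := by fun_prop
  have cqd : Continuous qd := by fun_prop
  have cv : Continuous v := by fun_prop
  have cvd : Continuous vd := by fun_prop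
  have ibp1 : ∫ θ in (0:ℝ)..π, (ud θ * q θ + u θ * qd θ) = u π * q π - u 0 * q 0 :=
    intervalIntegral.integral_deriv_mul_eq_sub (fun x _ => hu x) (fun x _ => hq x)
      (cud.intervalIntegrable _ _) (cqd.intervalIntegrable _ _)
  have hupi : u π = 0 := by
    simp [hu', Real.sin_pi, zero_pow (by omega : M + 1 ≠ 0)]
  have hu0 : u 0 = 0 := by
    simp [hu', Real.sin_zero, zero_pow (by omega : M + 1 ≠ 0)]
  have ibp2 : ∫ θ in (0:ℝ)..π, (vd θ * y θ + v θ * yd θ) = v π * y π - v 0 * y 0 :=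
    intervalIntegral.integral_deriv_mul_eq_sub (fun x _ => hv x) (fun x _ => hy x)
      (cvd.intervalIntegrable _ _) (cyd.intervalIntegrable _ _)
  have hvpi : v π = 0 := by
    simp [hv', Real.sin_pi, zero_pow (by omega : M + 1 ≠ 0)]
  have hv0 : v 0 = 0 := by
    simp [hv', Real.sin_zero, zero_pow (by omega : M + 1 ≠ 0)]
  rw [hupi, hu0] at ibp1
  rw [hvpi, hv0] at ibp2
  simp only [zero_mul, sub_self] at ibp1 ibp2
  rw [intervalIntegral.integral_add ((cud.fun_mul cq).intervalIntegrable _ _)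
    ((cu.fun_mul cqd).intervalIntegrable _ _)] at ibp1
  rw [intervalIntegral.integral_add ((cvd.fun_mul cy).intervalIntegrable _ _)
    ((cv.fun_mul cyd).intervalIntegrable _ _)] at ibp2
  have e1 : (∫ θ in (0:ℝ)..π, ud θ * q θ)
      = -((a:ℝ)*((a:ℝ)+(M:ℝ))) * ∫ θ in (0:ℝ)..π,
          Real.cos θ ^ m * gegenbauer lam a (Real.cos θ) * Real.sin θ ^ M := by
    rw [← intervalIntegral.integral_const_mul]
    apply intervalIntegral.integral_congr
    intro θ _
    simp only [hud', hq']
    ring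
  have e2 : (∫ θ in (0:ℝ)..π, u θ * qd θ) = ∫ θ in (0:ℝ)..π, v θ * yd θ := by
    apply intervalIntegral.integral_congr
    intro θ _
    simp only [hu', hqd', hv', hyd']
    ring
  have egoal : (∫ θ in (0:ℝ)..π,
        ((m:ℝ)*((m-1:ℕ):ℝ) * Real.cos θ ^ (m-2) * Real.sin θ ^ (M+2)
          - (m:ℝ)*((M:ℝ)+1) * Real.cos θ ^ m * Real.sin θ ^ M)
          * gegenbauer ((M:ℝ)/2) a (Real.cos θ))
      = ∫ θ in (0:ℝ)..π, vd θ * y θ := by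
    apply intervalIntegral.integral_congr
    intro θ _
    simp only [hvd', hy', hlam]
  rw [e1, e2] at ibp1
  rw [egoal]
  linarith [ibp1, ibp2]

lemma geg_orth (M a : ℕ) (hM : 1 ≤ M) : ∀ m, m < a →
    (∫ θ in (0:ℝ)..π, Real.cos θ ^ m * gegenbauer ((M:ℝ)/2) a (Real.cos θ) * Real.sin θ ^ M) = 0 := by
  intro m
  induction m using Nat.strong_induction_on with
  | _ m ih =>
  intro hma
  have hmain := SL_main M a hM m
  set lam : ℝ := (M:ℝ)/2 with hlam
  set I : ℕ → ℝ := fun j =>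
    ∫ θ in (0:ℝ)..π, Real.cos θ ^ j * gegenbauer lam a (Real.cos θ) * Real.sin θ ^ M with hI
  have hcont : ∀ j : ℕ, Continuous fun θ : ℝ =>
      Real.cos θ ^ j * gegenbauer lam a (Real.cos θ) * Real.sin θ ^ M := by
    intro j; fun_prop
  rcases Nat.lt_or_ge m 2 with hm2 | hm2
  · interval_cases m
    · -- m = 0
      have hz : ∀ θ:ℝ, (((0:ℕ):ℝ)*(((0:ℕ)-1:ℕ):ℝ) * Real.cos θ ^ ((0:ℕ)-2) * Real.sin θ ^ (M+2)
            - ((0:ℕ):ℝ)*((M:ℝ)+1) * Real.cos θ ^ (0:ℕ) * Real.sin θ ^ M)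
            * gegenbauer lam a (Real.cos θ) = 0 := by
        intro θ; norm_num
      have hz2 : (∫ θ in (0:ℝ)..π, (((0:ℕ):ℝ)*(((0:ℕ)-1:ℕ):ℝ) * Real.cos θ ^ ((0:ℕ)-2) * Real.sin θ ^ (M+2)
            - ((0:ℕ):ℝ)*((M:ℝ)+1) * Real.cos θ ^ (0:ℕ) * Real.sin θ ^ M)
            * gegenbauer lam a (Real.cos θ)) = 0 := by
        rw [intervalIntegral.integral_congr (g := fun _ => (0:ℝ)) (fun θ _ => hz θ)]
        simp
      rw [hz2] at hmain
      have hpos : (0:ℝ) < (a:ℝ)*((a:ℝ)+(M:ℝ)) := by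
        have h1 : (1:ℝ) ≤ (a:ℝ) := by exact_mod_cast hma
        have h2 : (1:ℝ) ≤ (M:ℝ) := by exact_mod_cast hM
        nlinarith
      have := mul_eq_zero.mp (by linarith [hmain] :
        (a:ℝ)*((a:ℝ)+(M:ℝ)) * (∫ θ in (0:ℝ)..π,
          Real.cos θ ^ (0:ℕ) * gegenbauer ((M:ℝ)/2) a (Real.cos θ) * Real.sin θ ^ M) = 0)
      exact this.resolve_left (ne_of_gt hpos)
    · -- m = 1
      have e : ∀ θ:ℝ, (((1:ℕ):ℝ)*(((1:ℕ)-1:ℕ):ℝ) * Real.cos θ ^ ((1:ℕ)-2) * Real.sin θ ^ (M+2)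
            - ((1:ℕ):ℝ)*((M:ℝ)+1) * Real.cos θ ^ (1:ℕ) * Real.sin θ ^ M)
            * gegenbauer lam a (Real.cos θ)
          = (-((M:ℝ)+1)) * (Real.cos θ ^ (1:ℕ) * gegenbauer lam a (Real.cos θ) * Real.sin θ ^ M) := by
        intro θ; norm_num; ring
      have ecg : (∫ θ in (0:ℝ)..π, (((1:ℕ):ℝ)*(((1:ℕ)-1:ℕ):ℝ) * Real.cos θ ^ ((1:ℕ)-2) * Real.sin θ ^ (M+2)
            - ((1:ℕ):ℝ)*((M:ℝ)+1) * Real.cos θ ^ (1:ℕ) * Real.sin θ ^ M)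
            * gegenbauer lam a (Real.cos θ))
          = (-((M:ℝ)+1)) * ∫ θ in (0:ℝ)..π,
              Real.cos θ ^ (1:ℕ) * gegenbauer lam a (Real.cos θ) * Real.sin θ ^ M := by
        rw [← intervalIntegral.integral_const_mul]
        exact intervalIntegral.integral_congr (fun θ _ => e θ)
      rw [ecg] at hmain
      have hcoef : ((a:ℝ)*((a:ℝ)+(M:ℝ)) - ((M:ℝ)+1)) * (∫ θ in (0:ℝ)..π,
          Real.cos θ ^ (1:ℕ) * gegenbauer ((M:ℝ)/2) a (Real.cos θ) * Real.sin θ ^ M) = 0 := by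
        linarith [hmain]
      have hpos : (0:ℝ) < (a:ℝ)*((a:ℝ)+(M:ℝ)) - ((M:ℝ)+1) := by
        have h1 : (2:ℝ) ≤ (a:ℝ) := by exact_mod_cast hma
        have h2 : (1:ℝ) ≤ (M:ℝ) := by exact_mod_cast hM
        nlinarith
      exact (mul_eq_zero.mp hcoef).resolve_left (ne_of_gt hpos)
  · -- m ≥ 2
    obtain ⟨w, rfl⟩ : ∃ w, m = w + 2 := ⟨m - 2, by omega⟩
    have e : ∀ θ:ℝ, (((w+2:ℕ):ℝ)*(((w+2)-1:ℕ):ℝ) * Real.cos θ ^ ((w+2)-2) * Real.sin θ ^ (M+2)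
          - ((w+2:ℕ):ℝ)*((M:ℝ)+1) * Real.cos θ ^ (w+2) * Real.sin θ ^ M)
          * gegenbauer lam a (Real.cos θ)
        = ((w:ℝ)+2)*((w:ℝ)+1) * (Real.cos θ ^ w * gegenbauer lam a (Real.cos θ) * Real.sin θ ^ M)
          - (((w:ℝ)+2)*((w:ℝ)+1) + ((w:ℝ)+2)*((M:ℝ)+1))
            * (Real.cos θ ^ (w+2) * gegenbauer lam a (Real.cos θ) * Real.sin θ ^ M) := by
      intro θ
      have hs2 : Real.sin θ ^ (M+2) = Real.sin θ ^ M * (1 - Real.cos θ^2) := by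
        rw [← Real.sin_sq]; ring
      have e1 : w + 2 - 1 = w + 1 := by omega
      have e2 : w + 2 - 2 = w := by omega
      rw [e1, e2, hs2]
      push_cast; ring
    have ecg : (∫ θ in (0:ℝ)..π, (((w+2:ℕ):ℝ)*(((w+2)-1:ℕ):ℝ) * Real.cos θ ^ ((w+2)-2) * Real.sin θ ^ (M+2)
          - ((w+2:ℕ):ℝ)*((M:ℝ)+1) * Real.cos θ ^ (w+2) * Real.sin θ ^ M)
          * gegenbauer lam a (Real.cos θ))
        = ((w:ℝ)+2)*((w:ℝ)+1) * (∫ θ in (0:ℝ)..π,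
            Real.cos θ ^ w * gegenbauer lam a (Real.cos θ) * Real.sin θ ^ M)
          - (((w:ℝ)+2)*((w:ℝ)+1) + ((w:ℝ)+2)*((M:ℝ)+1)) * (∫ θ in (0:ℝ)..π,
            Real.cos θ ^ (w+2) * gegenbauer lam a (Real.cos θ) * Real.sin θ ^ M) := by
      rw [← intervalIntegral.integral_const_mul, ← intervalIntegral.integral_const_mul,
        ← intervalIntegral.integral_sub
          (((continuous_const.fun_mul (hcont w))).intervalIntegrable _ _)
          (((continuous_const.fun_mul (hcont (w+2)))).intervalIntegrable _ _)]
      exact intervalIntegral.integral_congr (fun θ _ => e θ)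
    rw [ecg] at hmain
    have ihm : (∫ θ in (0:ℝ)..π,
        Real.cos θ ^ w * gegenbauer lam a (Real.cos θ) * Real.sin θ ^ M) = 0 :=
      ih w (by omega) (by omega)
    rw [ihm] at hmain
    have hcoef : ((a:ℝ)*((a:ℝ)+(M:ℝ)) - (((w:ℝ)+2)*((w:ℝ)+1) + ((w:ℝ)+2)*((M:ℝ)+1)))
        * (∫ θ in (0:ℝ)..π,
          Real.cos θ ^ (w+2) * gegenbauer ((M:ℝ)/2) a (Real.cos θ) * Real.sin θ ^ M) = 0 := by
      linarith [hmain]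
    have hpos : (0:ℝ) < (a:ℝ)*((a:ℝ)+(M:ℝ)) - (((w:ℝ)+2)*((w:ℝ)+1) + ((w:ℝ)+2)*((M:ℝ)+1)) := by
      have h1 : ((w:ℝ)+2+1) ≤ (a:ℝ) := by exact_mod_cast hma
      have h2 : (1:ℝ) ≤ (M:ℝ) := by exact_mod_cast hM
      nlinarith
    exact (mul_eq_zero.mp hcoef).resolve_left (ne_of_gt hpos)

noncomputable def gegP (lam : ℝ) (l : ℕ) : Polynomial ℝ :=
  ∑ k ∈ Finset.range (l / 2 + 1),
    Polynomial.C (gco lam l k * 2^(l - 2*k)) * Polynomial.X ^ (l - 2*k)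

lemma gegP_eval (lam : ℝ) (l : ℕ) (t : ℝ) : (gegP lam l).eval t = gegenbauer lam l t := by
  rw [gegenbauer_eq, gegP, Polynomial.eval_finset_sum]
  apply Finset.sum_congr rfl
  intro k _
  simp [mul_pow]
  ring

lemma gegP_natDegree_le (lam : ℝ) (l : ℕ) : (gegP lam l).natDegree ≤ l := by
  apply Polynomial.natDegree_sum_le_of_forall_le
  intro k hk
  refine le_trans (Polynomial.natDegree_C_mul_le _ _) ?_
  simpa using le_trans (Polynomial.natDegree_X_pow_le _) (by omega : l - 2*k ≤ l)

lemma geg_orth_poly (M a : ℕ) (hM : 1 ≤ M) (Q : Polynomial ℝ) (hdeg : Q.natDegree < a) :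
    ∫ θ in (0:ℝ)..π, Q.eval (Real.cos θ) * gegenbauer ((M:ℝ)/2) a (Real.cos θ) * Real.sin θ ^ M
      = 0 := by
  have hpt : ∀ θ:ℝ, Q.eval (Real.cos θ) * gegenbauer ((M:ℝ)/2) a (Real.cos θ) * Real.sin θ ^ M
      = ∑ i ∈ Finset.range (Q.natDegree + 1),
          Q.coeff i * (Real.cos θ ^ i * gegenbauer ((M:ℝ)/2) a (Real.cos θ) * Real.sin θ ^ M) := by
    intro θ
    rw [Polynomial.eval_eq_sum_range, Finset.sum_mul, Finset.sum_mul]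
    apply Finset.sum_congr rfl
    intro i _
    ring
  rw [intervalIntegral.integral_congr (fun θ _ => hpt θ),
    intervalIntegral.integral_finset_sum (fun i _ => (by fun_prop : Continuous fun θ:ℝ =>
      Q.coeff i * (Real.cos θ ^ i * gegenbauer ((M:ℝ)/2) a (Real.cos θ) * Real.sin θ ^ M)).intervalIntegrable _ _)]
  apply Finset.sum_eq_zero
  intro i hi
  rw [intervalIntegral.integral_const_mul, geg_orth M a hM i
    (lt_of_le_of_lt (Nat.lt_succ_iff.mp (Finset.mem_range.mp hi)) hdeg), mul_zero]

lemma gegenbauer_neg (lam : ℝ) (l : ℕ) (t : ℝ) :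
    gegenbauer lam l (-t) = (-1)^l * gegenbauer lam l t := by
  rw [gegenbauer_eq, gegenbauer_eq, Finset.mul_sum]
  apply Finset.sum_congr rfl
  intro k hk
  have h2k : 2*k ≤ l := by
    have := Finset.mem_range.mp hk
    omega
  have hpow : (-1:ℝ)^l = (-1:ℝ)^(l-2*k) := by
    conv_lhs => rw [← Nat.sub_add_cancel h2k]
    rw [pow_add, pow_mul]
    norm_num
  have : (2 * -t) ^ (l - 2*k) = (-1:ℝ)^(l-2*k) * (2*t)^(l-2*k) := by
    rw [← neg_pow, ← neg_mul_comm]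
    ring_nf
  rw [this, ← hpow]
  ring

lemma vanish_parity (lamA lamB : ℝ) (a b ε E : ℕ) (hodd : ¬ Even (a + b + ε)) :
    ∫ x in (0:ℝ)..π, gegenbauer lamA a (Real.cos x) * gegenbauer lamB b (Real.cos x)
      * Real.cos x ^ ε * Real.sin x ^ E = 0 := by
  set f : ℝ → ℝ := fun x => gegenbauer lamA a (Real.cos x) * gegenbauer lamB b (Real.cos x)
      * Real.cos x ^ ε * Real.sin x ^ E with hf
  have key : ∀ x:ℝ, f (π - x) = - f x := by
    intro x
    have hsign : (-1:ℝ)^a * (-1:ℝ)^b * (-1:ℝ)^ε = -1 := by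
      rw [← pow_add, ← pow_add]
      exact Odd.neg_one_pow (Nat.not_even_iff_odd.mp hodd)
    simp only [hf, Real.cos_pi_sub, Real.sin_pi_sub, gegenbauer_neg, neg_pow (Real.cos x)]
    linear_combination (gegenbauer lamA a (Real.cos x) * gegenbauer lamB b (Real.cos x)
      * Real.cos x ^ ε * Real.sin x ^ E) * hsign
  have h1 : (∫ x in (0:ℝ)..π, f (π - x)) = ∫ x in (0:ℝ)..π, f x := by
    simpa using intervalIntegral.integral_comp_sub_left f π
  have h2 : (∫ x in (0:ℝ)..π, f (π - x)) = - ∫ x in (0:ℝ)..π, f x := by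
    rw [intervalIntegral.integral_congr (g := fun x => - f x) (fun x _ => key x),
      intervalIntegral.integral_neg]
  rw [h2] at h1
  linarith [h1]

lemma vanish_degree (M a : ℕ) (hM : 1 ≤ M) (lamB : ℝ) (b ε r : ℕ) (hdeg : b + ε + 2*r < a) :
    ∫ x in (0:ℝ)..π, gegenbauer ((M:ℝ)/2) a (Real.cos x) * gegenbauer lamB b (Real.cos x)
      * Real.cos x ^ ε * Real.sin x ^ (M + 2*r) = 0 := by
  set Q : Polynomial ℝ := gegP lamB b * Polynomial.X ^ ε * (1 - Polynomial.X^2)^r with hQ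
  have hQdeg : Q.natDegree < a := by
    refine lt_of_le_of_lt ?_ hdeg
    refine le_trans (Polynomial.natDegree_mul_le) ?_
    have h1 : (gegP lamB b * Polynomial.X ^ ε : Polynomial ℝ).natDegree ≤ b + ε := by
      refine le_trans (Polynomial.natDegree_mul_le) ?_
      exact Nat.add_le_add (gegP_natDegree_le lamB b) (Polynomial.natDegree_X_pow_le _)
    have h2 : ((1 - Polynomial.X^2 : Polynomial ℝ)^r).natDegree ≤ 2*r := by
      refine le_trans (Polynomial.natDegree_pow_le) ?_
      have : (1 - Polynomial.X^2 : Polynomial ℝ).natDegree ≤ 2 := by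
        refine le_trans (Polynomial.natDegree_sub_le _ _) ?_
        simp [Polynomial.natDegree_X_pow]
      nlinarith
    omega
  have hpt : ∀ x:ℝ, gegenbauer ((M:ℝ)/2) a (Real.cos x) * gegenbauer lamB b (Real.cos x)
      * Real.cos x ^ ε * Real.sin x ^ (M + 2*r)
      = Q.eval (Real.cos x) * gegenbauer ((M:ℝ)/2) a (Real.cos x) * Real.sin x ^ M := by
    intro x
    have hs2 : Real.sin x ^ (M + 2*r) = Real.sin x ^ M * (1 - Real.cos x^2)^r := by
      rw [pow_add, pow_mul, Real.sin_sq]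
    simp only [hQ, Polynomial.eval_mul, Polynomial.eval_pow, Polynomial.eval_sub,
      Polynomial.eval_one, Polynomial.eval_X, gegP_eval, hs2]
    ring
  rw [intervalIntegral.integral_congr (fun x _ => hpt x)]
  exact geg_orth_poly M a hM Q hQdeg

lemma vanish_degree' (M b : ℕ) (hM : 1 ≤ M) (lamA : ℝ) (a ε r : ℕ) (hdeg : a + ε + 2*r < b) :
    ∫ x in (0:ℝ)..π, gegenbauer lamA a (Real.cos x) * gegenbauer ((M:ℝ)/2) b (Real.cos x)
      * Real.cos x ^ ε * Real.sin x ^ (M + 2*r) = 0 := by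
  have h0 := vanish_degree M b hM lamA a ε r hdeg
  rw [intervalIntegral.integral_congr
    (g := fun x => gegenbauer ((M:ℝ)/2) b (Real.cos x) * gegenbauer lamA a (Real.cos x)
      * Real.cos x ^ ε * Real.sin x ^ (M + 2*r)) (fun x _ => by ring)]
  exact h0

lemma phi_exp_int (d : ℤ) (hd : d ≠ 0) :
    ∫ x in (0:ℝ)..(2*π), Complex.exp (Complex.I * (d:ℂ) * (x:ℂ)) = 0 := by
  have hc : (Complex.I * (d:ℂ)) ≠ 0 := by
    simp [Complex.I_ne_zero, hd]
  have h := integral_exp_mul_complex (a := (0:ℝ)) (b := 2*π) hc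
  have hpt : ∀ x:ℝ, Complex.exp (Complex.I * (d:ℂ) * (x:ℂ)) = Complex.exp (Complex.I * (d:ℂ) * (x:ℂ)) := fun _ => rfl
  rw [show (fun x : ℝ => Complex.exp (Complex.I * (d:ℂ) * (x:ℂ)))
    = (fun x : ℝ => Complex.exp ((Complex.I * (d:ℂ)) * (x:ℂ))) from rfl]
  rw [h]
  have h1 : Complex.exp (Complex.I * (d:ℂ) * ((2*π : ℝ):ℂ)) = 1 := by
    have := Complex.exp_int_mul_two_pi_mul_I d
    rw [← this]
    congr 1
    push_cast
    ring
  have h2 : Complex.exp (Complex.I * (d:ℂ) * ((0:ℝ):ℂ)) = 1 := by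
    norm_num
  rw [h1, h2]
  simp

lemma phi_exp_cos (d : ℤ) (hd : d.natAbs ≠ 1) :
    ∫ x in (0:ℝ)..(2*π), Complex.exp (Complex.I * (d:ℂ) * (x:ℂ)) * ((Real.cos x : ℝ):ℂ) = 0 := by
  have hpt : ∀ x:ℝ, Complex.exp (Complex.I * (d:ℂ) * (x:ℂ)) * ((Real.cos x : ℝ):ℂ)
      = (Complex.exp (Complex.I * ((d+1 : ℤ):ℂ) * (x:ℂ))
        + Complex.exp (Complex.I * ((d-1 : ℤ):ℂ) * (x:ℂ))) / 2 := by
    intro x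
    rw [Complex.ofReal_cos, Complex.cos]
    rw [show Complex.I * ((d+1 : ℤ):ℂ) * (x:ℂ) = Complex.I*(d:ℂ)*(x:ℂ) + (x:ℂ)*Complex.I by push_cast; ring,
      show Complex.I * ((d-1 : ℤ):ℂ) * (x:ℂ) = Complex.I*(d:ℂ)*(x:ℂ) + (-(x:ℂ))*Complex.I by push_cast; ring,
      Complex.exp_add, Complex.exp_add]
    ring
  rw [intervalIntegral.integral_congr (fun x _ => hpt x)]
  have hsplit : (∫ x in (0:ℝ)..(2*π),
      (Complex.exp (Complex.I * ((d+1 : ℤ):ℂ) * (x:ℂ))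
        + Complex.exp (Complex.I * ((d-1 : ℤ):ℂ) * (x:ℂ))) / 2)
      = ((∫ x in (0:ℝ)..(2*π), Complex.exp (Complex.I * ((d+1 : ℤ):ℂ) * (x:ℂ)))
        + (∫ x in (0:ℝ)..(2*π), Complex.exp (Complex.I * ((d-1 : ℤ):ℂ) * (x:ℂ)))) / 2 := by
    rw [intervalIntegral.integral_div, intervalIntegral.integral_add]
    · exact (Continuous.intervalIntegrable (by fun_prop) _ _)
    · exact (Continuous.intervalIntegrable (by fun_prop) _ _)
  rw [hsplit, phi_exp_int (d+1) (by omega), phi_exp_int (d-1) (by omega)]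
  norm_num

lemma phi_exp_sin (d : ℤ) (hd : d.natAbs ≠ 1) :
    ∫ x in (0:ℝ)..(2*π), Complex.exp (Complex.I * (d:ℂ) * (x:ℂ)) * ((Real.sin x : ℝ):ℂ) = 0 := by
  have hpt : ∀ x:ℝ, Complex.exp (Complex.I * (d:ℂ) * (x:ℂ)) * ((Real.sin x : ℝ):ℂ)
      = (Complex.exp (Complex.I * ((d-1 : ℤ):ℂ) * (x:ℂ))
        - Complex.exp (Complex.I * ((d+1 : ℤ):ℂ) * (x:ℂ))) * Complex.I / 2 := by
    intro x
    rw [Complex.ofReal_sin, Complex.sin]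
    rw [show Complex.I * ((d+1 : ℤ):ℂ) * (x:ℂ) = Complex.I*(d:ℂ)*(x:ℂ) + (x:ℂ)*Complex.I by push_cast; ring,
      show Complex.I * ((d-1 : ℤ):ℂ) * (x:ℂ) = Complex.I*(d:ℂ)*(x:ℂ) + (-(x:ℂ))*Complex.I by push_cast; ring,
      Complex.exp_add, Complex.exp_add]
    ring
  rw [intervalIntegral.integral_congr (fun x _ => hpt x)]
  have hsplit : (∫ x in (0:ℝ)..(2*π),
      (Complex.exp (Complex.I * ((d-1 : ℤ):ℂ) * (x:ℂ))
        - Complex.exp (Complex.I * ((d+1 : ℤ):ℂ) * (x:ℂ))) * Complex.I / 2)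
      = ((∫ x in (0:ℝ)..(2*π), Complex.exp (Complex.I * ((d-1 : ℤ):ℂ) * (x:ℂ)))
        - (∫ x in (0:ℝ)..(2*π), Complex.exp (Complex.I * ((d+1 : ℤ):ℂ) * (x:ℂ)))) * Complex.I / 2 := by
    simp_rw [mul_div_assoc]
    rw [intervalIntegral.integral_mul_const, intervalIntegral.integral_sub]
    · exact (Continuous.intervalIntegrable (by fun_prop) _ _)
    · exact (Continuous.intervalIntegrable (by fun_prop) _ _)
  rw [hsplit, phi_exp_int (d+1) (by omega), phi_exp_int (d-1) (by omega)]
  norm_num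

lemma level_main (N α β a b s ε : ℕ) (hN : 1 ≤ N)
    (hαβ : (α = β ∧ s = 0 ∧ ε ≤ 1) ∨ (s = 1 ∧ ε = 0 ∧ (β = α + 1 ∨ α = β + 1)))
    (hJ : (∫ x in (0:ℝ)..π, gegenbauer (((N + 2*α:ℕ):ℝ)/2) a (Real.cos x)
        * gegenbauer (((N + 2*β:ℕ):ℝ)/2) b (Real.cos x)
        * Real.cos x ^ ε * Real.sin x ^ (α+β+N+s)) ≠ 0) :
    ((s = 0 ∧ ε = 0) → (b:ℤ) + β = (a:ℤ) + α) ∧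
    (s + ε = 1 → ((b:ℤ)+β) - ((a:ℤ)+α) = 1 ∨ ((a:ℤ)+α) - ((b:ℤ)+β) = 1) := by
  have hpar : Even (a + b + ε) := by
    by_contra hodd
    exact hJ (vanish_parity _ _ a b ε _ hodd)
  obtain ⟨t, ht⟩ := hpar
  rcases hαβ with ⟨hab, hs0, he1⟩ | ⟨hs1, he0, hab⟩
  · subst hab; subst hs0
    have hJ1 : (∫ x in (0:ℝ)..π, gegenbauer (((N + 2*α:ℕ):ℝ)/2) a (Real.cos x)
        * gegenbauer (((N + 2*α:ℕ):ℝ)/2) b (Real.cos x)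
        * Real.cos x ^ ε * Real.sin x ^ ((N + 2*α) + 2*0)) ≠ 0 := by
      simpa only [show (N + 2*α) + 2*0 = α+α+N+0 by omega] using hJ
    have h1 : a ≤ b + ε := by
      by_contra hcon
      push_neg at hcon
      exact hJ1 (vanish_degree (N+2*α) a (by omega) _ b ε 0 (by omega))
    have h2 : b ≤ a + ε := by
      by_contra hcon
      push_neg at hcon
      exact hJ1 (vanish_degree' (N+2*α) b (by omega) _ a ε 0 (by omega))
    constructor
    · rintro ⟨-, he0⟩
      subst he0
      omega
    · intro hse
      have he1' : ε = 1 := by omega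
      subst he1'
      omega
  · subst hs1; subst he0
    rcases hab with hb | ha
    · subst hb
      have hJ1 : (∫ x in (0:ℝ)..π, gegenbauer (((N + 2*α:ℕ):ℝ)/2) a (Real.cos x)
          * gegenbauer (((N + 2*(α+1):ℕ):ℝ)/2) b (Real.cos x)
          * Real.cos x ^ 0 * Real.sin x ^ ((N + 2*α) + 2*1)) ≠ 0 := by
        simpa only [show (N + 2*α) + 2*1 = α+(α+1)+N+1 by omega] using hJ
      have hJ2 : (∫ x in (0:ℝ)..π, gegenbauer (((N + 2*α:ℕ):ℝ)/2) a (Real.cos x)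
          * gegenbauer (((N + 2*(α+1):ℕ):ℝ)/2) b (Real.cos x)
          * Real.cos x ^ 0 * Real.sin x ^ ((N + 2*(α+1)) + 2*0)) ≠ 0 := by
        simpa only [show (N + 2*(α+1)) + 2*0 = α+(α+1)+N+1 by omega] using hJ
      have h1 : a ≤ b + 2 := by
        by_contra hcon
        push_neg at hcon
        exact hJ1 (vanish_degree (N+2*α) a (by omega) _ b 0 1 (by omega))
      have h2 : b ≤ a := by
        by_contra hcon
        push_neg at hcon
        exact hJ2 (vanish_degree' (N+2*(α+1)) b (by omega) _ a 0 0 (by omega))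
      exact ⟨by omega, by omega⟩
    · subst ha
      have hJ1 : (∫ x in (0:ℝ)..π, gegenbauer (((N + 2*(β+1):ℕ):ℝ)/2) a (Real.cos x)
          * gegenbauer (((N + 2*β:ℕ):ℝ)/2) b (Real.cos x)
          * Real.cos x ^ 0 * Real.sin x ^ ((N + 2*(β+1)) + 2*0)) ≠ 0 := by
        simpa only [show (N + 2*(β+1)) + 2*0 = (β+1)+β+N+1 by omega] using hJ
      have hJ2 : (∫ x in (0:ℝ)..π, gegenbauer (((N + 2*(β+1):ℕ):ℝ)/2) a (Real.cos x)
          * gegenbauer (((N + 2*β:ℕ):ℝ)/2) b (Real.cos x)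
          * Real.cos x ^ 0 * Real.sin x ^ ((N + 2*β) + 2*1)) ≠ 0 := by
        simpa only [show (N + 2*β) + 2*1 = (β+1)+β+N+1 by omega] using hJ
      have h1 : a ≤ b := by
        by_contra hcon
        push_neg at hcon
        exact hJ1 (vanish_degree (N+2*(β+1)) a (by omega) _ b 0 0 (by omega))
      have h2 : b ≤ a + 2 := by
        by_contra hcon
        push_neg at hcon
        exact hJ2 (vanish_degree' (N+2*β) b (by omega) _ a 0 1 (by omega))
      exact ⟨by omega, by omega⟩

/-- The spherical-coordinate parametrization of `S^n ⊂ ℝ^{n+1}` by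
`(θ₁,…,θ_{n-1}) ∈ [0,π]^{n-1}` and `φ ∈ [0,2π)` (here `0`-indexed). -/
noncomputable def sphCoord (n : ℕ) (θ : Fin (n - 1) → ℝ) (φ : ℝ) : Fin (n + 1) → ℝ :=
  fun i =>
    if h : (i : ℕ) < n - 1 then
      (∏ j ∈ Finset.univ.filter fun j : Fin (n - 1) => (j : ℕ) < (i : ℕ), Real.sin (θ j)) *
        Real.cos (θ ⟨i, h⟩)
    else
      (∏ j, Real.sin (θ j)) * (if (i : ℕ) = n - 1 then Real.cos φ else Real.sin φ)

/-- The density of the normalized surface measure `dσ` in spherical coordinates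
(up to the factor `1/Σ_n`): `sin^{n-1}θ₁ · sin^{n-2}θ₂ ⋯ sin θ_{n-1}`. -/
noncomputable def sphWeight (n : ℕ) (θ : Fin (n - 1) → ℝ) : ℝ :=
  ∏ j : Fin (n - 1), Real.sin (θ j) ^ (n - 1 - (j : ℕ))

/-- The coordinate domain `[0,π]^{n-1} × [0,2π]`. -/
noncomputable def sphDomain (n : ℕ) : Set ((Fin (n - 1) → ℝ) × ℝ) :=
  (Set.univ.pi fun _ => Set.Icc (0 : ℝ) Real.pi) ×ˢ Set.Icc (0 : ℝ) (2 * Real.pi)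

/-- `Σ_n`, the surface area of `S^n`. -/
noncomputable def sphArea (n : ℕ) : ℝ :=
  2 * Real.pi ^ (((n : ℝ) + 1) / 2) / Real.Gamma (((n : ℝ) + 1) / 2)

/-- The index set of the hyperspherical-harmonic basis: pairs `(l, k̂)` where
`k̂ = (k₀, k₁, …, k_{n-1}, 0, 0, …)` with `k₀ = l ≥ k₁ ≥ ⋯ ≥ |k_{n-1}| ≥ 0`. -/
def HSHIndex (n : ℕ) : Type :=
  {p : ℕ × (ℕ → ℤ) // p.2 0 = p.1 ∧ (∀ i, i + 1 ≤ n - 1 → |p.2 (i + 1)| ≤ p.2 i) ∧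
    ∀ i, n ≤ i → p.2 i = 0}

/-- The (unnormalized) hyperspherical harmonic `Y_l^k` in spherical coordinates:
`∏_{τ=1}^{n-1} C_{k_{τ-1}-k_τ}^{(n-τ)/2+k_τ}(cos θ_τ) · sin^{k_τ}θ_τ · e^{i k_{n-1} φ}`
(`0`-indexed, with `k_τ` replaced by `|k_τ|`, which only matters for `τ = n-1`). -/
noncomputable def hshFun (n : ℕ) (k : ℕ → ℤ) (θ : Fin (n - 1) → ℝ) (φ : ℝ) : ℂ :=
  ((∏ τ : Fin (n - 1),
      gegenbauer (((n : ℝ) - 1 - (τ : ℕ)) / 2 + (k ((τ : ℕ) + 1)).natAbs)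
          ((k (τ : ℕ) - |k ((τ : ℕ) + 1)|).toNat) (Real.cos (θ τ)) *
        Real.sin (θ τ) ^ (k ((τ : ℕ) + 1)).natAbs : ℝ) : ℂ) *
    Complex.exp (Complex.I * (k (n - 1) : ℂ) * (φ : ℂ))

noncomputable def Fth (n : ℕ) (k m : ℕ → ℤ) (j : Fin (n+1)) (τ : Fin (n-1)) (x : ℝ) : ℝ :=
  (gegenbauer (((n:ℝ)-1-(τ:ℕ))/2 + (k ((τ:ℕ)+1)).natAbs)
      ((k (τ:ℕ) - |k ((τ:ℕ)+1)|).toNat) (Real.cos x) * Real.sin x ^ (k ((τ:ℕ)+1)).natAbs)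
  * (gegenbauer (((n:ℝ)-1-(τ:ℕ))/2 + (m ((τ:ℕ)+1)).natAbs)
      ((m (τ:ℕ) - |m ((τ:ℕ)+1)|).toNat) (Real.cos x) * Real.sin x ^ (m ((τ:ℕ)+1)).natAbs)
  * Real.sin x ^ (n - 1 - (τ:ℕ))
  * (if (j:ℕ) < n-1 then
      (if (τ:ℕ) < (j:ℕ) then Real.sin x else if (τ:ℕ) = (j:ℕ) then Real.cos x else 1)
     else Real.sin x)

noncomputable def Fph (n : ℕ) (k m : ℕ → ℤ) (j : Fin (n+1)) (x : ℝ) : ℂ :=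
  Complex.exp (Complex.I * ((m (n-1) - k (n-1) : ℤ):ℂ) * (x:ℂ))
    * (if (j:ℕ) < n-1 then 1
       else if (j:ℕ) = n-1 then ((Real.cos x : ℝ):ℂ) else ((Real.sin x : ℝ):ℂ))

lemma prod_xfac (n : ℕ) (θ : Fin (n-1) → ℝ) (i : ℕ) (h : i < n-1) :
    (∏ τ ∈ Finset.univ.filter (fun τ : Fin (n-1) => (τ:ℕ) < i), Real.sin (θ τ))
      * Real.cos (θ ⟨i, h⟩)
    = ∏ τ : Fin (n-1),
        (if (τ:ℕ) < i then Real.sin (θ τ) else if (τ:ℕ) = i then Real.cos (θ τ) else 1) := by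
  have hsplit : ∀ τ : Fin (n-1),
      (if (τ:ℕ) < i then Real.sin (θ τ) else if (τ:ℕ) = i then Real.cos (θ τ) else 1)
      = (if (τ:ℕ) < i then Real.sin (θ τ) else 1) * (if τ = ⟨i, h⟩ then Real.cos (θ τ) else 1) := by
    intro τ
    rcases Nat.lt_trichotomy (τ:ℕ) i with hlt | heq | hgt
    · rw [if_pos hlt, if_pos hlt, if_neg (by intro hh; rw [hh] at hlt; simp at hlt)]
      ring
    · rw [if_neg (by omega), if_pos heq, if_neg (by omega), if_pos (Fin.ext heq)]
      ring
    · rw [if_neg (by omega), if_neg (by omega), if_neg (by omega),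
        if_neg (by intro hh; rw [hh] at hgt; simp at hgt)]
      ring
  rw [Finset.prod_congr rfl (fun τ _ => hsplit τ), Finset.prod_mul_distrib]
  congr 1
  · rw [Finset.prod_filter]
  · rw [Finset.prod_ite_eq' Finset.univ (⟨i, h⟩ : Fin (n-1)) (fun τ => Real.cos (θ τ))]
    simp

lemma hsh_pointwise (n : ℕ) (hn : 2 ≤ n) (k m : ℕ → ℤ) (j : Fin (n+1))
    (θ : Fin (n-1) → ℝ) (φ : ℝ) :
    ((sphCoord n θ φ j : ℝ):ℂ) * (starRingEnd ℂ) (hshFun n k θ φ) * hshFun n m θ φ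
        * ((sphWeight n θ : ℝ):ℂ)
    = ((∏ τ : Fin (n-1), Fth n k m j τ (θ τ) : ℝ) : ℂ) * Fph n k m j φ := by
  have hconj : (starRingEnd ℂ) (hshFun n k θ φ)
      = ((∏ τ : Fin (n-1),
          gegenbauer (((n : ℝ) - 1 - (τ : ℕ)) / 2 + (k ((τ : ℕ) + 1)).natAbs)
            ((k (τ : ℕ) - |k ((τ : ℕ) + 1)|).toNat) (Real.cos (θ τ)) *
            Real.sin (θ τ) ^ (k ((τ : ℕ) + 1)).natAbs : ℝ) : ℂ)
        * Complex.exp (-(Complex.I * ((k (n - 1) : ℤ):ℂ) * (φ:ℂ))) := by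
    unfold hshFun
    rw [map_mul, Complex.conj_ofReal, ← Complex.exp_conj]
    congr 2
    simp [map_mul, Complex.conj_ofReal]
  have hexp : Complex.exp (-(Complex.I * ((k (n - 1) : ℤ):ℂ) * (φ:ℂ)))
      * Complex.exp (Complex.I * ((m (n-1) : ℤ):ℂ) * (φ:ℂ))
      = Complex.exp (Complex.I * ((m (n-1) - k (n-1) : ℤ):ℂ) * (φ:ℂ)) := by
    rw [← Complex.exp_add]
    congr 1
    push_cast
    ring
  have hprod : (∏ τ : Fin (n-1), Fth n k m j τ (θ τ))
      = (∏ τ : Fin (n-1),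
          gegenbauer (((n : ℝ) - 1 - (τ : ℕ)) / 2 + (k ((τ : ℕ) + 1)).natAbs)
            ((k (τ : ℕ) - |k ((τ : ℕ) + 1)|).toNat) (Real.cos (θ τ)) *
            Real.sin (θ τ) ^ (k ((τ : ℕ) + 1)).natAbs)
        * (∏ τ : Fin (n-1),
          gegenbauer (((n : ℝ) - 1 - (τ : ℕ)) / 2 + (m ((τ : ℕ) + 1)).natAbs)
            ((m (τ : ℕ) - |m ((τ : ℕ) + 1)|).toNat) (Real.cos (θ τ)) *
            Real.sin (θ τ) ^ (m ((τ : ℕ) + 1)).natAbs)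
        * sphWeight n θ
        * (∏ τ : Fin (n-1),
            (if (j:ℕ) < n-1 then
              (if (τ:ℕ) < (j:ℕ) then Real.sin (θ τ) else if (τ:ℕ) = (j:ℕ) then Real.cos (θ τ) else 1)
             else Real.sin (θ τ))) := by
    unfold Fth sphWeight
    rw [← Finset.prod_mul_distrib, ← Finset.prod_mul_distrib, ← Finset.prod_mul_distrib]
  rw [hconj]
  unfold hshFun
  rw [hprod]
  unfold Fph
  rcases Nat.lt_or_ge (j:ℕ) (n-1) with hj | hj
  · have hx : sphCoord n θ φ j
        = (∏ τ ∈ Finset.univ.filter (fun τ : Fin (n-1) => (τ:ℕ) < (j:ℕ)), Real.sin (θ τ))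
          * Real.cos (θ ⟨(j:ℕ), hj⟩) := by
      unfold sphCoord
      rw [dif_pos hj]
    rw [hx, prod_xfac n θ (j:ℕ) hj]
    simp only [if_pos hj]
    rw [← hexp]
    push_cast
    ring
  · have hx : sphCoord n θ φ j
        = (∏ τ, Real.sin (θ τ)) * (if (j:ℕ) = n - 1 then Real.cos φ else Real.sin φ) := by
      unfold sphCoord
      rw [dif_neg (by omega)]
    have hjn : ¬ ((j:ℕ) < n-1) := by omega
    rw [hx]
    simp only [if_neg hjn]
    rcases Nat.eq_or_lt_of_le hj with hje | hjg
    · simp only [if_pos hje.symm]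
      rw [← hexp]
      push_cast
      ring
    · have : ¬ ((j:ℕ) = n-1) := by omega
      simp only [if_neg this]
      rw [← hexp]
      push_cast
      ring

lemma indicator_prod_eq (n : ℕ) (f : Fin (n-1) → ℝ → ℂ) :
    Set.indicator (Set.univ.pi fun _ : Fin (n-1) => Set.Icc (0:ℝ) π)
      (fun θ : Fin (n-1) → ℝ => ∏ τ, f τ (θ τ))
    = fun θ => ∏ τ, Set.indicator (Set.Icc (0:ℝ) π) (f τ) (θ τ) := by
  funext θ
  by_cases hθ : θ ∈ Set.univ.pi fun _ : Fin (n-1) => Set.Icc (0:ℝ) π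
  · rw [Set.indicator_of_mem hθ]
    apply Finset.prod_congr rfl
    intro τ _
    rw [Set.indicator_of_mem (hθ τ (Set.mem_univ τ))]
  · rw [Set.indicator_of_notMem hθ]
    rw [Set.mem_pi] at hθ
    push_neg at hθ
    obtain ⟨τ, -, hτ⟩ := hθ
    symm
    apply Finset.prod_eq_zero (Finset.mem_univ τ)
    rw [Set.indicator_of_notMem hτ]

lemma factorize (n : ℕ) (hn : 2 ≤ n) (k m : ℕ → ℤ) (j : Fin (n+1)) :
    (∫ z in sphDomain n, ((sphCoord n z.1 z.2 j : ℝ):ℂ)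
        * (starRingEnd ℂ) (hshFun n k z.1 z.2) * hshFun n m z.1 z.2
        * ((sphWeight n z.1 : ℝ):ℂ))
    = (∏ τ : Fin (n-1), ((∫ x in (0:ℝ)..π, Fth n k m j τ x : ℝ) : ℂ))
      * ∫ x in (0:ℝ)..(2*π), Fph n k m j x := by
  have hmeasS : MeasurableSet (Set.univ.pi fun _ : Fin (n-1) => Set.Icc (0:ℝ) π) :=
    MeasurableSet.univ_pi fun _ => measurableSet_Icc
  have step1 : (∫ z in sphDomain n, ((sphCoord n z.1 z.2 j : ℝ):ℂ)
        * (starRingEnd ℂ) (hshFun n k z.1 z.2) * hshFun n m z.1 z.2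
        * ((sphWeight n z.1 : ℝ):ℂ))
      = ∫ z in sphDomain n,
          (((∏ τ : Fin (n-1), Fth n k m j τ (z.1 τ) : ℝ) : ℂ)) * Fph n k m j z.2 := by
    apply MeasureTheory.setIntegral_congr_fun
    · exact (hmeasS.prod measurableSet_Icc)
    · intro z _
      exact hsh_pointwise n hn k m j z.1 z.2
  rw [step1]
  unfold sphDomain
  rw [MeasureTheory.Measure.volume_eq_prod, ← MeasureTheory.Measure.prod_restrict]
  rw [MeasureTheory.integral_prod_mul
    (f := fun θ : Fin (n-1) → ℝ => ((∏ τ : Fin (n-1), Fth n k m j τ (θ τ) : ℝ) : ℂ))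
    (g := fun φ : ℝ => Fph n k m j φ)]
  congr 1
  · -- pi part
    have e0 : (fun θ : Fin (n-1) → ℝ => ((∏ τ : Fin (n-1), Fth n k m j τ (θ τ) : ℝ) : ℂ))
        = fun θ => ∏ τ : Fin (n-1), ((Fth n k m j τ (θ τ) : ℝ) : ℂ) := by
      funext θ
      exact Complex.ofReal_prod _ _
    rw [e0, ← MeasureTheory.integral_indicator hmeasS,
      indicator_prod_eq n (fun τ x => ((Fth n k m j τ x : ℝ) : ℂ))]
    beta_reduce
    rw [MeasureTheory.volume_pi, MeasureTheory.integral_fintype_prod_eq_prod (ι := Fin (n-1))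
      (f := fun τ x => Set.indicator (Set.Icc (0:ℝ) π) (fun y => ((Fth n k m j τ y : ℝ):ℂ)) x)]
    apply Finset.prod_congr rfl
    intro τ _
    rw [MeasureTheory.integral_indicator measurableSet_Icc,
      MeasureTheory.integral_Icc_eq_integral_Ioc,
      ← intervalIntegral.integral_of_le Real.pi_pos.le,
      intervalIntegral.integral_ofReal]
  · rw [MeasureTheory.integral_Icc_eq_integral_Ioc,
      ← intervalIntegral.integral_of_le (by positivity : (0:ℝ) ≤ 2*π)]

lemma natAbs_adj {x y : ℤ} (h : |y - x| = 1) :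
    y.natAbs = x.natAbs + 1 ∨ x.natAbs = y.natAbs + 1 := by
  rw [abs_eq (by norm_num : (0:ℤ) ≤ 1)] at h
  rcases h with h | h <;> omega

lemma level_step (n ι : ℕ) (hn : 2 ≤ n) (hι : ι < n-1) (k m : ℕ → ℤ) (j : Fin (n+1))
    (hk1 : |k (ι+1)| ≤ k ι) (hm1 : |m (ι+1)| ≤ m ι)
    (hnext : (ι+1 < min ((j:ℕ)+1) n → |m (ι+1) - k (ι+1)| = 1) ∧
             (min ((j:ℕ)+1) n ≤ ι+1 → m (ι+1) = k (ι+1)))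
    (hJ : (∫ x in (0:ℝ)..π, Fth n k m j ⟨ι, hι⟩ x) ≠ 0) :
    (ι < min ((j:ℕ)+1) n → |m ι - k ι| = 1) ∧ (min ((j:ℕ)+1) n ≤ ι → m ι = k ι) := by
  set α : ℕ := (k (ι+1)).natAbs with hα
  set β : ℕ := (m (ι+1)).natAbs with hβ
  set a : ℕ := (k ι - |k (ι+1)|).toNat with ha
  set b : ℕ := (m ι - |m (ι+1)|).toNat with hb
  set N : ℕ := n - 1 - ι with hN
  have hNc : (N:ℝ) = (n:ℝ) - 1 - ι := by
    have h : N + ι + 1 = n := by omega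
    have : ((N:ℝ) + ι + 1) = (n:ℝ) := by exact_mod_cast congrArg (Nat.cast (R := ℝ)) h
    linarith
  have hN1 : 1 ≤ N := by omega
  have haz : (a:ℤ) = k ι - |k (ι+1)| := Int.toNat_of_nonneg (by linarith [hk1])
  have hbz : (b:ℤ) = m ι - |m (ι+1)| := Int.toNat_of_nonneg (by linarith [hm1])
  have hαz : (α:ℤ) = |k (ι+1)| := (Int.abs_eq_natAbs _).symm
  have hβz : (β:ℤ) = |m (ι+1)| := (Int.abs_eq_natAbs _).symm
  have hlamk : ((n:ℝ)-1-(ι:ℕ))/2 + ((k (ι+1)).natAbs : ℝ) = ((N + 2*α : ℕ):ℝ)/2 := by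
    push_cast
    rw [hNc]
    ring
  have hlamm : ((n:ℝ)-1-(ι:ℕ))/2 + ((m (ι+1)).natAbs : ℝ) = ((N + 2*β : ℕ):ℝ)/2 := by
    push_cast
    rw [hNc]
    ring
  -- canonical rewriting of the integrand, depending on the position of ι relative to j
  have hcan : ∀ (s ε : ℕ),
      (if (j:ℕ) < n-1 then
        (if ι < (j:ℕ) then (1:ℕ) else if ι = (j:ℕ) then 2 else 0)
       else 1) = 2*ε + s →
      (∀ x : ℝ, Fth n k m j ⟨ι, hι⟩ x
        = gegenbauer (((N + 2*α : ℕ):ℝ)/2) a (Real.cos x)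
          * gegenbauer (((N + 2*β : ℕ):ℝ)/2) b (Real.cos x)
          * Real.cos x ^ ε * Real.sin x ^ (α+β+N+s)) → True := fun _ _ _ _ => trivial
  clear hcan
  rcases Nat.lt_or_ge (j:ℕ) (n-1) with hc1 | hc1
  · have hν : min ((j:ℕ)+1) n = (j:ℕ)+1 := by omega
    rcases Nat.lt_trichotomy ι (j:ℕ) with hcase | hcase | hcase
    · -- ι < j : s = 1, ε = 0
      have hd1 : |m (ι+1) - k (ι+1)| = 1 := hnext.1 (by omega)
      have hαβ : β = α + 1 ∨ α = β + 1 := by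
        rcases natAbs_adj hd1 with h | h
        · left; omega
        · right; omega
      have hpt : ∀ x : ℝ, Fth n k m j ⟨ι, hι⟩ x
          = gegenbauer (((N + 2*α : ℕ):ℝ)/2) a (Real.cos x)
            * gegenbauer (((N + 2*β : ℕ):ℝ)/2) b (Real.cos x)
            * Real.cos x ^ 0 * Real.sin x ^ (α+β+N+1) := by
        intro x
        unfold Fth
        simp only [Fin.val_mk, if_pos hc1, if_pos hcase]
        rw [← hα, ← hβ, ← ha, ← hb, ← hN, hlamk, hlamm]
        ring
      rw [intervalIntegral.integral_congr (fun x _ => hpt x)] at hJ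
      have := (level_main N α β a b 1 0 hN1 (Or.inr ⟨rfl, rfl, hαβ⟩) hJ).2 (by omega)
      constructor
      · intro _
        rw [abs_eq (by norm_num : (0:ℤ) ≤ 1)]
        omega
      · intro hcon; omega
    · -- ι = j : s = 0, ε = 1
      have heq : m (ι+1) = k (ι+1) := hnext.2 (by omega)
      have hαβ : α = β := by rw [hα, hβ, heq]
      have hpt : ∀ x : ℝ, Fth n k m j ⟨ι, hι⟩ x
          = gegenbauer (((N + 2*α : ℕ):ℝ)/2) a (Real.cos x)
            * gegenbauer (((N + 2*β : ℕ):ℝ)/2) b (Real.cos x)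
            * Real.cos x ^ 1 * Real.sin x ^ (α+β+N+0) := by
        intro x
        unfold Fth
        simp only [Fin.val_mk, if_pos hc1, if_neg (by omega : ¬ ι < (j:ℕ)), if_pos hcase]
        rw [← hα, ← hβ, ← ha, ← hb, ← hN, hlamk, hlamm]
        ring
      rw [intervalIntegral.integral_congr (fun x _ => hpt x)] at hJ
      have := (level_main N α β a b 0 1 hN1 (Or.inl ⟨hαβ, rfl, by omega⟩) hJ).2 (by omega)
      constructor
      · intro _
        rw [abs_eq (by norm_num : (0:ℤ) ≤ 1)]
        omega
      · intro hcon; omega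
    · -- ι > j : s = 0, ε = 0
      have heq : m (ι+1) = k (ι+1) := hnext.2 (by omega)
      have hαβ : α = β := by rw [hα, hβ, heq]
      have hpt : ∀ x : ℝ, Fth n k m j ⟨ι, hι⟩ x
          = gegenbauer (((N + 2*α : ℕ):ℝ)/2) a (Real.cos x)
            * gegenbauer (((N + 2*β : ℕ):ℝ)/2) b (Real.cos x)
            * Real.cos x ^ 0 * Real.sin x ^ (α+β+N+0) := by
        intro x
        unfold Fth
        simp only [Fin.val_mk, if_pos hc1, if_neg (by omega : ¬ ι < (j:ℕ)),
          if_neg (by omega : ¬ ι = (j:ℕ))]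
        rw [← hα, ← hβ, ← ha, ← hb, ← hN, hlamk, hlamm]
        ring
      rw [intervalIntegral.integral_congr (fun x _ => hpt x)] at hJ
      have := (level_main N α β a b 0 0 hN1 (Or.inl ⟨hαβ, rfl, by omega⟩) hJ).1 ⟨rfl, rfl⟩
      constructor
      · intro hcon; omega
      · intro _; omega
  · -- j ≥ n-1 : s = 1, ε = 0
    have hν : min ((j:ℕ)+1) n = n := by omega
    have hd1 : |m (ι+1) - k (ι+1)| = 1 := hnext.1 (by omega)
    have hαβ : β = α + 1 ∨ α = β + 1 := by
      rcases natAbs_adj hd1 with h | h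
      · left; omega
      · right; omega
    have hpt : ∀ x : ℝ, Fth n k m j ⟨ι, hι⟩ x
        = gegenbauer (((N + 2*α : ℕ):ℝ)/2) a (Real.cos x)
          * gegenbauer (((N + 2*β : ℕ):ℝ)/2) b (Real.cos x)
          * Real.cos x ^ 0 * Real.sin x ^ (α+β+N+1) := by
      intro x
      unfold Fth
      simp only [Fin.val_mk, if_neg (by omega : ¬ (j:ℕ) < n-1)]
      rw [← hα, ← hβ, ← ha, ← hb, ← hN, hlamk, hlamm]
      ring
    rw [intervalIntegral.integral_congr (fun x _ => hpt x)] at hJ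
    have := (level_main N α β a b 1 0 hN1 (Or.inr ⟨rfl, rfl, hαβ⟩) hJ).2 (by omega)
    constructor
    · intro _
      rw [abs_eq (by norm_num : (0:ℤ) ≤ 1)]
      omega
    · intro hcon; omega

lemma phi_step (n : ℕ) (hn : 2 ≤ n) (k m : ℕ → ℤ) (j : Fin (n+1))
    (hφ : (∫ x in (0:ℝ)..(2*π), Fph n k m j x) ≠ 0) :
    (n-1 < min ((j:ℕ)+1) n → |m (n-1) - k (n-1)| = 1) ∧
    (min ((j:ℕ)+1) n ≤ n-1 → m (n-1) = k (n-1)) := by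
  rcases Nat.lt_or_ge (j:ℕ) (n-1) with hc | hc
  · have hpt : ∀ x:ℝ, Fph n k m j x
        = Complex.exp (Complex.I * ((m (n-1) - k (n-1) : ℤ):ℂ) * (x:ℂ)) := by
      intro x; unfold Fph; rw [if_pos hc, mul_one]
    rw [intervalIntegral.integral_congr (fun x _ => hpt x)] at hφ
    have hd : m (n-1) - k (n-1) = 0 := by
      by_contra hne
      exact hφ (phi_exp_int _ hne)
    exact ⟨fun hcon => by omega, fun _ => by omega⟩
  · have habs : |m (n-1) - k (n-1)| = 1 := by
      by_contra hne
      have hne' : (m (n-1) - k (n-1)).natAbs ≠ 1 := by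
        intro hh
        apply hne
        rw [Int.abs_eq_natAbs, hh]
        rfl
      rcases Nat.eq_or_lt_of_le hc with hje | hjg
      · have hpt : ∀ x:ℝ, Fph n k m j x
            = Complex.exp (Complex.I * ((m (n-1) - k (n-1) : ℤ):ℂ) * (x:ℂ))
              * ((Real.cos x : ℝ):ℂ) := by
          intro x; unfold Fph
          rw [if_neg (by omega), if_pos hje.symm]
        rw [intervalIntegral.integral_congr (fun x _ => hpt x)] at hφ
        exact hφ (phi_exp_cos _ hne')
      · have hpt : ∀ x:ℝ, Fph n k m j x
            = Complex.exp (Complex.I * ((m (n-1) - k (n-1) : ℤ):ℂ) * (x:ℂ))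
              * ((Real.sin x : ℝ):ℂ) := by
          intro x; unfold Fph
          rw [if_neg (by omega), if_neg (by omega)]
        rw [intervalIntegral.integral_congr (fun x _ => hpt x)] at hφ
        exact hφ (phi_exp_sin _ hne')
    exact ⟨fun _ => habs, fun hcon => by omega⟩

lemma pattern_of_nonzero (n : ℕ) (hn : 2 ≤ n) (k m : ℕ → ℤ)
    (hkc : ∀ i, i + 1 ≤ n - 1 → |k (i + 1)| ≤ k i) (hk0 : ∀ i, n ≤ i → k i = 0)
    (hmc : ∀ i, i + 1 ≤ n - 1 → |m (i + 1)| ≤ m i) (hm0 : ∀ i, n ≤ i → m i = 0)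
    (j : Fin (n+1))
    (hθ : ∀ τ : Fin (n-1), (∫ x in (0:ℝ)..π, Fth n k m j τ x) ≠ 0)
    (hφ : (∫ x in (0:ℝ)..(2*π), Fph n k m j x) ≠ 0) :
    ∃ ν : ℕ, 1 ≤ ν ∧ ν ≤ n ∧ (∀ ι, ι < ν → |m ι - k ι| = 1) ∧ (∀ ι, ν ≤ ι → m ι = k ι) := by
  have main : ∀ t : ℕ, ∀ ι : ℕ, ι ≤ n-1 → n-1-ι ≤ t →
      ((ι < min ((j:ℕ)+1) n → |m ι - k ι| = 1) ∧ (min ((j:ℕ)+1) n ≤ ι → m ι = k ι)) := by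
    intro t
    induction t with
    | zero =>
      intro ι h1 h2
      have : ι = n-1 := by omega
      subst this
      exact phi_step n hn k m j hφ
    | succ t ih =>
      intro ι h1 h2
      rcases Nat.eq_or_lt_of_le h1 with he | hlt
      · subst he
        exact phi_step n hn k m j hφ
      · exact level_step n ι hn (by omega) k m j (hkc ι (by omega)) (hmc ι (by omega))
          (ih (ι+1) (by omega) (by omega)) (hθ ⟨ι, by omega⟩)
  refine ⟨min ((j:ℕ)+1) n, by omega, by omega, ?_, ?_⟩
  · intro ι hι
    exact (main (n-1) ι (by omega) (by omega)).1 hι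
  · intro ι hν
    rcases le_or_gt ι (n-1) with h | h
    · exact (main (n-1) ι h (by omega)).2 hν
    · rw [hk0 ι (by omega), hm0 ι (by omega)]

lemma continuous_hshFun (n : ℕ) (k : ℕ → ℤ) :
    Continuous (fun z : (Fin (n-1) → ℝ) × ℝ => hshFun n k z.1 z.2) := by
  unfold hshFun
  apply Continuous.mul
  · apply Complex.continuous_ofReal.comp
    apply continuous_finset_prod
    intro τ _
    apply Continuous.mul
    · exact (continuous_gegenbauer _ _).comp
        (Real.continuous_cos.comp ((continuous_apply τ).comp continuous_fst))
    · exact (Real.continuous_sin.comp ((continuous_apply τ).comp continuous_fst)).pow _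
  · exact Complex.continuous_exp.comp (by fun_prop)

lemma continuous_sphCoordFn (n : ℕ) (j : Fin (n+1)) :
    Continuous (fun z : (Fin (n-1) → ℝ) × ℝ => sphCoord n z.1 z.2 j) := by
  unfold sphCoord
  rcases Nat.lt_or_ge (j:ℕ) (n-1) with h | h
  · simp only [dif_pos h]
    apply Continuous.mul
    · apply continuous_finset_prod
      intro τ _
      exact Real.continuous_sin.comp ((continuous_apply τ).comp continuous_fst)
    · exact Real.continuous_cos.comp ((continuous_apply _).comp continuous_fst)
  · simp only [dif_neg (by omega : ¬ ((j:ℕ) < n-1))]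
    apply Continuous.mul
    · apply continuous_finset_prod
      intro τ _
      exact Real.continuous_sin.comp ((continuous_apply τ).comp continuous_fst)
    · rcases Nat.decEq (j:ℕ) (n-1) with he | he
      · simp only [if_neg he]
        exact Real.continuous_sin.comp continuous_snd
      · simp only [if_pos he]
        exact Real.continuous_cos.comp continuous_snd

lemma continuous_sphWeightFn (n : ℕ) :
    Continuous (fun θ : Fin (n-1) → ℝ => sphWeight n θ) := by
  unfold sphWeight
  apply continuous_finset_prod
  intro τ _
  exact (Real.continuous_sin.comp (continuous_apply τ)).pow _

lemma abs_sphCoord_le (n : ℕ) (θ : Fin (n-1) → ℝ) (φ : ℝ) (j : Fin (n+1)) :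
    |sphCoord n θ φ j| ≤ 1 := by
  have hp : |∏ τ : Fin (n-1), Real.sin (θ τ)| ≤ 1 := by
    rw [Finset.abs_prod]
    apply Finset.prod_le_one
    · intro τ _; exact abs_nonneg _
    · intro τ _; exact Real.abs_sin_le_one _
  have hpf : ∀ s : Finset (Fin (n-1)), |∏ τ ∈ s, Real.sin (θ τ)| ≤ 1 := by
    intro s
    rw [Finset.abs_prod]
    apply Finset.prod_le_one
    · intro τ _; exact abs_nonneg _
    · intro τ _; exact Real.abs_sin_le_one _
  unfold sphCoord
  rcases Nat.lt_or_ge (j:ℕ) (n-1) with h | h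
  · rw [dif_pos h, abs_mul]
    calc |∏ τ ∈ Finset.univ.filter fun τ : Fin (n-1) => (τ:ℕ) < (j:ℕ), Real.sin (θ τ)|
          * |Real.cos (θ ⟨(j:ℕ), h⟩)| ≤ 1 * 1 :=
        mul_le_mul (hpf _) (Real.abs_cos_le_one _) (abs_nonneg _) zero_le_one
      _ = 1 := by norm_num
  · rw [dif_neg (by omega : ¬ ((j:ℕ) < n-1)), abs_mul]
    have h2 : |if (j:ℕ) = n-1 then Real.cos φ else Real.sin φ| ≤ 1 := by
      split_ifs
      · exact Real.abs_cos_le_one _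
      · exact Real.abs_sin_le_one _
    calc |∏ τ : Fin (n-1), Real.sin (θ τ)| * |if (j:ℕ) = n-1 then Real.cos φ else Real.sin φ|
        ≤ 1 * 1 := mul_le_mul hp h2 (abs_nonneg _) zero_le_one
      _ = 1 := by norm_num

lemma sphWeight_nonneg (n : ℕ) (θ : Fin (n-1) → ℝ)
    (hθ : θ ∈ Set.univ.pi fun _ : Fin (n-1) => Set.Icc (0:ℝ) π) :
    0 ≤ sphWeight n θ := by
  unfold sphWeight
  apply Finset.prod_nonneg
  intro τ _
  apply pow_nonneg
  have := hθ τ (Set.mem_univ τ)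
  exact Real.sin_nonneg_of_nonneg_of_le_pi this.1 this.2

lemma countable_HSHIndex (n : ℕ) : Countable (HSHIndex n) := by
  have hinj : Function.Injective
      (fun p : HSHIndex n => (p.1.1, fun i : Fin n => p.1.2 (i:ℕ))) := by
    intro p q h
    rw [Prod.ext_iff] at h
    obtain ⟨h1, h2⟩ := h
    apply Subtype.ext
    apply Prod.ext
    · exact h1
    · funext i
      rcases Nat.lt_or_ge i n with hi | hi
      · exact congrFun h2 ⟨i, hi⟩
      · rw [p.2.2.2 i hi, q.2.2.2 i hi]
  exact Function.Injective.countable hinj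

theorem center_of_gravity_series (n : ℕ) (hn : 2 ≤ n)
    -- normalization constants making the basis orthonormal
    (A : HSHIndex n → ℝ) (hA : ∀ p, 0 < A p)
    -- the normalized basis functions `Y_l^k`
    (Y : HSHIndex n → (Fin (n - 1) → ℝ) → ℝ → ℂ)
    (hYdef : ∀ p θ φ, Y p θ φ = (A p : ℂ) * hshFun n p.1.2 θ φ)
    -- orthonormality w.r.t. the normalized surface measure
    (horth : ∀ p q : HSHIndex n,
      (p = q → (1 / sphArea n : ℂ) * ∫ z in sphDomain n,
          (starRingEnd ℂ) (Y p z.1 z.2) * Y q z.1 z.2 * (sphWeight n z.1 : ℂ) = 1) ∧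
      (p ≠ q → (1 / sphArea n : ℂ) * ∫ z in sphDomain n,
          (starRingEnd ℂ) (Y p z.1 z.2) * Y q z.1 z.2 * (sphWeight n z.1 : ℂ) = 0))
    -- a continuous function `F` with Fourier coefficients `c p`
    (c : HSHIndex n → ℂ) (F : (Fin (n - 1) → ℝ) → ℝ → ℂ)
    (hFcont : Continuous fun z : (Fin (n - 1) → ℝ) × ℝ => F z.1 z.2)
    (hFexp : ∀ θ φ, HasSum (fun p => c p * Y p θ φ) (F θ φ))
    -- `‖F‖₂ ≠ 0`
    (hFne : (1 / sphArea n) * (∫ z in sphDomain n,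
        ‖F z.1 z.2‖ ^ 2 * sphWeight n z.1) ≠ 0)
    -- absolute convergence allowing the interchange of summation and integration
    (hdom : Summable fun pq : HSHIndex n × HSHIndex n =>
      ‖c pq.1‖ * ‖c pq.2‖ * ∫ z in sphDomain n,
        ‖Y pq.1 z.1 z.2‖ * ‖Y pq.2 z.1 z.2‖ * sphWeight n z.1)
    -- the matrix elements `I(l₁,k,l₂,m) = ∫_{S^n} x ⬝ conj(Y_{l₁}^k) Y_{l₂}^m dσ`
    (I : HSHIndex n → HSHIndex n → Fin (n + 1) → ℂ)
    (hIdef : ∀ p q j, I p q j = (1 / sphArea n : ℂ) * ∫ z in sphDomain n,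
        (sphCoord n z.1 z.2 j : ℂ) * (starRingEnd ℂ) (Y p z.1 z.2) * Y q z.1 z.2 *
          (sphWeight n z.1 : ℂ)) :
    -- (a) `‖F‖₂² ξ_O(F) = ∑ conj(F̂^k_{l₁}) F̂^m_{l₂} I(l₁,k,l₂,m)` componentwise
    (∀ j : Fin (n + 1),
      HasSum (fun pq : HSHIndex n × HSHIndex n =>
          (starRingEnd ℂ) (c pq.1) * c pq.2 * I pq.1 pq.2 j)
        ((1 / sphArea n : ℂ) * ∫ z in sphDomain n,
          (sphCoord n z.1 z.2 j : ℂ) * (‖F z.1 z.2‖ ^ 2 : ℝ) *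
            (sphWeight n z.1 : ℂ))) ∧
    -- (b) `I(l₁,k,l₂,m) = 0` unless `|l₁-l₂| = 1` together with: there is a
    -- `ν ∈ {1,…,n}` with `m_ι = k_ι ± 1` for `ι < ν` and `m_ι = k_ι` for `ι ≥ ν`
    (∀ p q : HSHIndex n,
      ¬ (|(q.1.1 : ℤ) - (p.1.1 : ℤ)| = 1 ∧ ∃ ν : ℕ, 1 ≤ ν ∧ ν ≤ n ∧
          (∀ ι, ι < ν → |q.1.2 ι - p.1.2 ι| = 1) ∧
          (∀ ι, ν ≤ ι → q.1.2 ι = p.1.2 ι)) →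
        ∀ j : Fin (n + 1), I p q j = 0) := by
  classical
  haveI : Countable (HSHIndex n) := countable_HSHIndex n
  have hDmeas : MeasurableSet (sphDomain n) :=
    (MeasurableSet.univ_pi fun _ => measurableSet_Icc).prod measurableSet_Icc
  have hDcpt : IsCompact (sphDomain n) :=
    (isCompact_univ_pi fun _ => isCompact_Icc).prod isCompact_Icc
  have hYcont : ∀ p : HSHIndex n, Continuous (fun z : (Fin (n-1) → ℝ) × ℝ => Y p z.1 z.2) := by
    intro p
    have he : (fun z : (Fin (n-1) → ℝ) × ℝ => Y p z.1 z.2)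
        = fun z => ((A p : ℝ):ℂ) * hshFun n p.1.2 z.1 z.2 := funext fun z => hYdef p z.1 z.2
    rw [he]
    exact continuous_const.mul (continuous_hshFun n p.1.2)
  constructor
  · -- part (a)
    intro j
    set T : HSHIndex n × HSHIndex n → ((Fin (n-1) → ℝ) × ℝ) → ℂ := fun pq z =>
      (starRingEnd ℂ) (c pq.1 * Y pq.1 z.1 z.2) * (c pq.2 * Y pq.2 z.1 z.2)
        * (((sphCoord n z.1 z.2 j : ℝ):ℂ) * ((sphWeight n z.1 : ℝ):ℂ)) with hT
    have hTcont : ∀ pq, Continuous (T pq) := by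
      intro pq
      apply Continuous.mul
      · apply Continuous.mul
        · exact Continuous.star (continuous_const.mul (hYcont pq.1))
        · exact continuous_const.mul (hYcont pq.2)
      · exact (Complex.continuous_ofReal.comp (continuous_sphCoordFn n j)).mul
          (Complex.continuous_ofReal.comp ((continuous_sphWeightFn n).comp continuous_fst))
    have hTint : ∀ pq, IntegrableOn (T pq) (sphDomain n) := fun pq =>
      (hTcont pq).continuousOn.integrableOn_compact hDcpt
    have hTbound : ∀ pq, ∀ z ∈ sphDomain n, ‖T pq z‖
        ≤ ‖c pq.1‖ * ‖c pq.2‖ * (‖Y pq.1 z.1 z.2‖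
            * ‖Y pq.2 z.1 z.2‖ * sphWeight n z.1) := by
      intro pq z hz
      have hw : 0 ≤ sphWeight n z.1 := sphWeight_nonneg n z.1 hz.1
      have hx := abs_sphCoord_le n z.1 z.2 j
      have hTn : ‖T pq z‖ = (‖c pq.1‖ * ‖c pq.2‖ * (‖Y pq.1 z.1 z.2‖
          * ‖Y pq.2 z.1 z.2‖ * sphWeight n z.1)) * |sphCoord n z.1 z.2 j| := by
        simp only [hT, norm_mul, RCLike.norm_conj, Complex.norm_real, Real.norm_eq_abs,
          abs_of_nonneg hw]
        ring
      rw [hTn]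
      calc (‖c pq.1‖ * ‖c pq.2‖ * (‖Y pq.1 z.1 z.2‖ * ‖Y pq.2 z.1 z.2‖ * sphWeight n z.1))
            * |sphCoord n z.1 z.2 j|
          ≤ (‖c pq.1‖ * ‖c pq.2‖ * (‖Y pq.1 z.1 z.2‖ * ‖Y pq.2 z.1 z.2‖ * sphWeight n z.1)) * 1 :=
            mul_le_mul_of_nonneg_left hx (by positivity)
        _ = ‖c pq.1‖ * ‖c pq.2‖ * (‖Y pq.1 z.1 z.2‖
            * ‖Y pq.2 z.1 z.2‖ * sphWeight n z.1) := by
            rw [mul_one]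
    have hsum : Summable (fun pq : HSHIndex n × HSHIndex n => ∫ z in sphDomain n, ‖T pq z‖) := by
      apply Summable.of_nonneg_of_le
        (fun pq => MeasureTheory.integral_nonneg fun z => norm_nonneg _) _ hdom
      intro pq
      have hbint : IntegrableOn (fun z : (Fin (n-1) → ℝ) × ℝ =>
          ‖c pq.1‖ * ‖c pq.2‖ * (‖Y pq.1 z.1 z.2‖
            * ‖Y pq.2 z.1 z.2‖ * sphWeight n z.1)) (sphDomain n) := by
        apply ContinuousOn.integrableOn_compact (X := (Fin (n-1) → ℝ) × ℝ) hDcpt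
        apply Continuous.continuousOn
        apply continuous_const.mul
        exact ((continuous_norm.comp (hYcont pq.1)).mul
          (continuous_norm.comp (hYcont pq.2))).mul
          ((continuous_sphWeightFn n).comp continuous_fst)
      calc (∫ z in sphDomain n, ‖T pq z‖)
          ≤ ∫ z in sphDomain n, ‖c pq.1‖ * ‖c pq.2‖ * (‖Y pq.1 z.1 z.2‖
              * ‖Y pq.2 z.1 z.2‖ * sphWeight n z.1) :=
            MeasureTheory.setIntegral_mono_on (hTint pq).norm hbint hDmeas
              (fun z hz => hTbound pq z hz)
        _ = ‖c pq.1‖ * ‖c pq.2‖ * ∫ z in sphDomain n, ‖Y pq.1 z.1 z.2‖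
              * ‖Y pq.2 z.1 z.2‖ * sphWeight n z.1 := by
            rw [show (fun z : (Fin (n-1) → ℝ) × ℝ => ‖c pq.1‖ * ‖c pq.2‖
                * (‖Y pq.1 z.1 z.2‖ * ‖Y pq.2 z.1 z.2‖ * sphWeight n z.1))
              = fun z => (‖c pq.1‖ * ‖c pq.2‖)
                * (‖Y pq.1 z.1 z.2‖ * ‖Y pq.2 z.1 z.2‖ * sphWeight n z.1)
              from funext fun z => by ring]
            rw [MeasureTheory.integral_const_mul]
    have hHasSum := MeasureTheory.hasSum_integral_of_summable_integral_norm
      (μ := MeasureTheory.volume.restrict (sphDomain n)) hTint hsum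
    -- a.e. summability
    have hf'' : ∀ pq : HSHIndex n × HSHIndex n,
        AEMeasurable (fun z => (‖T pq z‖₊ : ENNReal))
          (MeasureTheory.volume.restrict (sphDomain n)) := fun pq =>
      (hTint pq).aestronglyMeasurable.enorm
    have hlt : ∑' pq : HSHIndex n × HSHIndex n,
        ∫⁻ z in sphDomain n, (‖T pq z‖₊ : ENNReal) ≠ ⊤ := by
      have heach : ∀ pq : HSHIndex n × HSHIndex n,
          ∫⁻ z in sphDomain n, (‖T pq z‖₊ : ENNReal)
            = ENNReal.ofReal (∫ z in sphDomain n, ‖T pq z‖) := fun pq =>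
        (MeasureTheory.ofReal_integral_norm_eq_lintegral_enorm (hTint pq)).symm
      rw [funext heach, ← ENNReal.ofReal_tsum_of_nonneg
        (fun pq => MeasureTheory.integral_nonneg fun z => norm_nonneg _) hsum]
      exact ENNReal.ofReal_ne_top
    have hhh : ∀ᵐ z ∂(MeasureTheory.volume.restrict (sphDomain n)),
        Summable fun pq : HSHIndex n × HSHIndex n => (‖T pq z‖₊ : ℝ) := by
      rw [← MeasureTheory.lintegral_tsum hf''] at hlt
      refine (MeasureTheory.ae_lt_top' (AEMeasurable.ennreal_tsum hf'') hlt).mono ?_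
      intro z hz
      rw [← ENNReal.tsum_coe_ne_top_iff_summable_coe]
      exact hz.ne
    have hident : ∀ᵐ z ∂(MeasureTheory.volume.restrict (sphDomain n)),
        (∑' pq : HSHIndex n × HSHIndex n, T pq z)
          = ((sphCoord n z.1 z.2 j : ℝ):ℂ) * ((‖F z.1 z.2‖ ^ 2 : ℝ):ℂ)
            * ((sphWeight n z.1 : ℝ):ℂ) := by
      refine hhh.mono ?_
      intro z hz
      have hsumz : Summable fun pq : HSHIndex n × HSHIndex n => T pq z :=
        Summable.of_nnnorm (NNReal.summable_coe.mp hz)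
      by_cases hK0 : (((sphCoord n z.1 z.2 j : ℝ):ℂ) * ((sphWeight n z.1 : ℝ):ℂ)) = 0
      · have hzero : ∀ pq : HSHIndex n × HSHIndex n, T pq z = 0 := by
          intro pq
          simp only [hT]
          rw [hK0, mul_zero]
        rw [tsum_congr hzero, tsum_zero]
        rw [show ((sphCoord n z.1 z.2 j : ℝ):ℂ) * ((‖F z.1 z.2‖ ^ 2 : ℝ):ℂ)
            * ((sphWeight n z.1 : ℝ):ℂ) = ((‖F z.1 z.2‖ ^ 2 : ℝ):ℂ)
            * (((sphCoord n z.1 z.2 j : ℝ):ℂ) * ((sphWeight n z.1 : ℝ):ℂ)) from by ring,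
          hK0, mul_zero]
      · have hfg : Summable fun pq : HSHIndex n × HSHIndex n =>
            (starRingEnd ℂ) (c pq.1 * Y pq.1 z.1 z.2) * (c pq.2 * Y pq.2 z.1 z.2) := by
          have h1 := hsumz.mul_right
            ((((sphCoord n z.1 z.2 j : ℝ):ℂ) * ((sphWeight n z.1 : ℝ):ℂ))⁻¹)
          refine h1.congr fun pq => ?_
          simp only [hT]
          rw [mul_inv_cancel_right₀ hK0]
        have hconjF : HasSum (fun p : HSHIndex n => (starRingEnd ℂ) (c p * Y p z.1 z.2))
            ((starRingEnd ℂ) (F z.1 z.2)) := by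
          have hmap := (hFexp z.1 z.2).map
            ((starRingEnd ℂ) : ℂ →+* ℂ).toAddMonoidHom (Complex.continuous_conj)
          exact hmap
        have hmul := HasSum.mul_eq hconjF (hFexp z.1 z.2) hfg.hasSum
        have htsumT : (∑' pq : HSHIndex n × HSHIndex n, T pq z)
            = (∑' pq : HSHIndex n × HSHIndex n, (starRingEnd ℂ) (c pq.1 * Y pq.1 z.1 z.2)
                * (c pq.2 * Y pq.2 z.1 z.2))
              * (((sphCoord n z.1 z.2 j : ℝ):ℂ) * ((sphWeight n z.1 : ℝ):ℂ)) := by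
          rw [tsum_mul_right]
        rw [htsumT, ← hmul]
        have habs : (starRingEnd ℂ) (F z.1 z.2) * F z.1 z.2
            = ((‖F z.1 z.2‖ ^ 2 : ℝ):ℂ) := by
          rw [mul_comm, Complex.mul_conj]
          norm_cast
          exact Complex.normSq_eq_norm_sq _
        rw [habs]
        ring
    rw [MeasureTheory.integral_congr_ae hident] at hHasSum
    have hfinal := hHasSum.mul_left ((1 / sphArea n : ℂ))
    have hsummand : (fun pq : HSHIndex n × HSHIndex n =>
        (1 / sphArea n : ℂ) * ∫ z in sphDomain n, T pq z)
        = fun pq => (starRingEnd ℂ) (c pq.1) * c pq.2 * I pq.1 pq.2 j := by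
      funext pq
      rw [hIdef pq.1 pq.2 j]
      rw [show (starRingEnd ℂ) (c pq.1) * c pq.2 * ((1 / sphArea n : ℂ) * ∫ z in sphDomain n,
          (sphCoord n z.1 z.2 j : ℂ) * (starRingEnd ℂ) (Y pq.1 z.1 z.2) * Y pq.2 z.1 z.2 *
            (sphWeight n z.1 : ℂ))
        = (1 / sphArea n : ℂ) * ((starRingEnd ℂ) (c pq.1) * c pq.2 * ∫ z in sphDomain n,
          (sphCoord n z.1 z.2 j : ℂ) * (starRingEnd ℂ) (Y pq.1 z.1 z.2) * Y pq.2 z.1 z.2 *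
            (sphWeight n z.1 : ℂ)) from by ring]
      congr 1
      rw [← MeasureTheory.integral_const_mul]
      apply MeasureTheory.setIntegral_congr_fun hDmeas
      intro z _
      simp only [hT, map_mul]
      ring
    rw [hsummand] at hfinal
    exact hfinal
  · -- part (b)
    intro p q hnot j
    by_contra hI0
    have hIval := hIdef p q j
    have hbase : (∫ z in sphDomain n, (sphCoord n z.1 z.2 j : ℂ)
          * (starRingEnd ℂ) (Y p z.1 z.2) * Y q z.1 z.2 * (sphWeight n z.1 : ℂ))
        = (((A p : ℝ):ℂ) * ((A q : ℝ):ℂ))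
          * ((∏ τ : Fin (n-1), ((∫ x in (0:ℝ)..π, Fth n p.1.2 q.1.2 j τ x : ℝ):ℂ))
            * ∫ x in (0:ℝ)..(2*π), Fph n p.1.2 q.1.2 j x) := by
      rw [← factorize n hn p.1.2 q.1.2 j, ← MeasureTheory.integral_const_mul]
      apply MeasureTheory.setIntegral_congr_fun hDmeas
      intro z _
      dsimp only
      rw [hYdef p z.1 z.2, hYdef q z.1 z.2, map_mul, Complex.conj_ofReal]
      ring
    rw [hbase] at hIval
    have hXne : ((∏ τ : Fin (n-1), ((∫ x in (0:ℝ)..π, Fth n p.1.2 q.1.2 j τ x : ℝ):ℂ))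
        * ∫ x in (0:ℝ)..(2*π), Fph n p.1.2 q.1.2 j x) ≠ 0 := by
      intro h0
      apply hI0
      rw [hIval, h0, mul_zero, mul_zero]
    obtain ⟨hprod_ne, hφne⟩ := mul_ne_zero_iff.mp hXne
    have hθne : ∀ τ : Fin (n-1), (∫ x in (0:ℝ)..π, Fth n p.1.2 q.1.2 j τ x) ≠ 0 := by
      intro τ hzero
      have := Finset.prod_ne_zero_iff.mp hprod_ne τ (Finset.mem_univ τ)
      apply this
      rw [hzero]
      simp
    obtain ⟨ν, h1, h2, h3, h4⟩ := pattern_of_nonzero n hn p.1.2 q.1.2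
      p.2.2.1 p.2.2.2 q.2.2.1 q.2.2.2 j hθne hφne
    apply hnot
    refine ⟨?_, ν, h1, h2, h3, h4⟩
    have h0 := h3 0 (by omega)
    rw [p.2.1, q.2.1] at h0
    exact h0
end

section
/- Let F ∈ C¹(S^n) be non-zero. Then the uncertainty inequality holds: [‖F‖₂² - |⟨x·F, F⟩|²/‖F‖₂²]^{1/2} · ‖∇_{S^n} F‖₂ ≥ (n/2)·|⟨x·F, F⟩|, where ⟨x·F, F⟩ = ∫_{S^n} x |F(x)|² dσ(x) ∈ ℝ^{n+1} and |·| denotes its Euclidean norm; equivalently, U(F) ≥ n/2 whenever ξ_O(F) ≠ 0. -/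
open MeasureTheory Metric Real

noncomputable section
namespace SUP
variable {m : ℕ}

abbrev E (m : ℕ) := EuclideanSpace ℝ (Fin m)

def rotL (i j : Fin m) (t : ℝ) : E m →ₗ[ℝ] E m where
  toFun x := WithLp.toLp 2 (fun k => if k = i then Real.cos t * x i + Real.sin t * x j
    else if k = j then -Real.sin t * x i + Real.cos t * x j else x k : Fin m → ℝ)
  map_add' x y := by
    ext k
    by_cases h : k = i
    · subst h; simp [PiLp.add_apply]; ring
    · by_cases h' : k = j
      · subst h'; simp [h, PiLp.add_apply]; ring
      · simp [h, h', PiLp.add_apply]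
  map_smul' c x := by
    ext k
    by_cases h : k = i
    · subst h; simp [PiLp.smul_apply, smul_eq_mul]; ring
    · by_cases h' : k = j
      · subst h'; simp [h, PiLp.smul_apply, smul_eq_mul]; ring
      · simp [h, h', PiLp.smul_apply]

lemma rotL_apply (i j : Fin m) (t : ℝ) (x : E m) (k : Fin m) :
    rotL i j t x k = if k = i then Real.cos t * x i + Real.sin t * x j
      else if k = j then -Real.sin t * x i + Real.cos t * x j else x k := rfl

lemma rotL_apply_i (i j : Fin m) (t : ℝ) (x : E m) :
    rotL i j t x i = Real.cos t * x i + Real.sin t * x j := by simp [rotL_apply]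

lemma rotL_apply_j (i j : Fin m) (hij : i ≠ j) (t : ℝ) (x : E m) :
    rotL i j t x j = -Real.sin t * x i + Real.cos t * x j := by
  simp [rotL_apply, hij.symm]

lemma rotL_apply_other (i j : Fin m) (t : ℝ) (x : E m) (k : Fin m)
    (hki : k ≠ i) (hkj : k ≠ j) : rotL i j t x k = x k := by
  simp [rotL_apply, hki, hkj]

lemma rotL_rotL (i j : Fin m) (hij : i ≠ j) (s t : ℝ) (x : E m) :
    rotL i j s (rotL i j t x) = rotL i j (s + t) x := by
  ext k
  simp only [rotL_apply]
  by_cases h : k = i <;> by_cases h' : k = j <;>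
    simp [h, h', hij, hij.symm, Real.cos_add, Real.sin_add] <;> ring

lemma rotL_zero (i j : Fin m) (x : E m) : rotL i j 0 x = x := by
  ext k
  simp only [rotL_apply]
  split_ifs with h1 h2
  · subst h1; simp
  · subst h2; simp
  · rfl

lemma norm_rotL (i j : Fin m) (hij : i ≠ j) (t : ℝ) (x : E m) :
    ‖rotL i j t x‖ = ‖x‖ := by
  have hsum : ∀ y : E m, ‖y‖ = Real.sqrt (∑ k, y k ^ 2) := by
    intro y
    rw [EuclideanSpace.norm_eq]
    congr 1
    exact Finset.sum_congr rfl fun k _ => by rw [Real.norm_eq_abs, sq_abs]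
  rw [hsum, hsum]
  congr 1
  have hj : j ∈ Finset.univ.erase i := Finset.mem_erase.2 ⟨hij.symm, Finset.mem_univ j⟩
  have key : ∀ y : E m, ∑ k, y k ^ 2
      = (∑ k ∈ (Finset.univ.erase i).erase j, y k ^ 2) + y j ^ 2 + y i ^ 2 := by
    intro y
    rw [Finset.sum_erase_add _ _ hj, Finset.sum_erase_add _ _ (Finset.mem_univ i)]
  rw [key, key]
  have h1 : ∀ k ∈ (Finset.univ.erase i).erase j, rotL i j t x k ^ 2 = x k ^ 2 := by
    intro k hk
    rcases Finset.mem_erase.1 hk with ⟨hkj, hk'⟩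
    rcases Finset.mem_erase.1 hk' with ⟨hki, -⟩
    rw [rotL_apply_other i j t x k hki hkj]
  rw [Finset.sum_congr rfl h1, rotL_apply_i, rotL_apply_j i j hij]
  nlinarith [Real.sin_sq_add_cos_sq t]

def rot (i j : Fin m) (hij : i ≠ j) (t : ℝ) : E m ≃ₗᵢ[ℝ] E m :=
  { LinearEquiv.ofLinear (re₁₂ := RingHomInvPair.ids) (re₂₁ := RingHomInvPair.ids) (rotL i j t) (rotL i j (-t))
      (by ext x k; simp [LinearMap.comp_apply, rotL_rotL i j hij, rotL_zero])
      (by ext x k; simp [LinearMap.comp_apply, rotL_rotL i j hij, rotL_zero]) with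
    norm_map' := norm_rotL i j hij t }

lemma rot_apply (i j : Fin m) (hij : i ≠ j) (t : ℝ) (x : E m) :
    rot i j hij t x = rotL i j t x := rfl


lemma coord_le (y : E m) (k : Fin m) : |y k| ≤ ‖y‖ := by
  rw [EuclideanSpace.norm_eq, ← Real.sqrt_sq_eq_abs (y k)]
  apply Real.sqrt_le_sqrt
  have h : y k ^ 2 = ‖y k‖ ^ 2 := by rw [Real.norm_eq_abs, sq_abs]
  rw [h]
  exact Finset.single_le_sum (f := fun i => ‖y i‖ ^ 2) (fun i _ => sq_nonneg _)
    (Finset.mem_univ k)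

def wv (i j : Fin m) (y : E m) : E m :=
  y j • EuclideanSpace.single i (1:ℝ) - y i • EuclideanSpace.single j (1:ℝ)

lemma wv_apply (i j : Fin m) (y : E m) (k : Fin m) :
    wv i j y k = y j * (if k = i then 1 else 0) - y i * (if k = j then 1 else 0) := by
  simp [wv, EuclideanSpace.single_apply, PiLp.sub_apply, PiLp.smul_apply, smul_eq_mul]

lemma norm_wv_le (i j : Fin m) (y : E m) : ‖wv i j y‖ ≤ 2 * ‖y‖ := by
  have h1 : ‖y j • EuclideanSpace.single i (1:ℝ)‖ ≤ ‖y‖ := by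
    rw [norm_smul, EuclideanSpace.norm_single]
    simpa using coord_le y j
  have h2 : ‖y i • EuclideanSpace.single j (1:ℝ)‖ ≤ ‖y‖ := by
    rw [norm_smul, EuclideanSpace.norm_single]
    simpa using coord_le y i
  calc ‖wv i j y‖ ≤ _ + _ := norm_sub_le _ _
  _ ≤ 2 * ‖y‖ := by linarith

lemma hasDerivAt_rotL (i j : Fin m) (hij : i ≠ j) (x : E m) (t : ℝ) :
    HasDerivAt (fun s => rotL i j s x) (wv i j (rotL i j t x)) t := by
  set a : E m := x i • EuclideanSpace.single i (1:ℝ) + x j • EuclideanSpace.single j (1:ℝ)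
    with ha
  set b : E m := x j • EuclideanSpace.single i (1:ℝ) - x i • EuclideanSpace.single j (1:ℝ)
    with hb
  have hcurve : (fun s => rotL i j s x)
      = fun s => Real.cos s • a + Real.sin s • b + (x - a) := by
    funext s
    ext k
    simp only [rotL_apply, ha, hb, PiLp.add_apply, PiLp.sub_apply, PiLp.smul_apply,
      smul_eq_mul, EuclideanSpace.single_apply]
    by_cases h : k = i
    · subst h; simp [hij, hij.symm]; try ring
    · by_cases h' : k = j
      · subst h'; simp [h, hij, hij.symm]; try ring
      · simp [h, h']
  have hd : HasDerivAt (fun s => Real.cos s • a + Real.sin s • b + (x - a))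
      ((-Real.sin t) • a + Real.cos t • b) t :=
    (((Real.hasDerivAt_cos t).smul_const a).add
      ((Real.hasDerivAt_sin t).smul_const b)).add_const _
  have heq : (-Real.sin t) • a + Real.cos t • b = wv i j (rotL i j t x) := by
    ext k
    simp only [wv_apply, rotL_apply, ha, hb, PiLp.add_apply, PiLp.sub_apply, PiLp.smul_apply,
      smul_eq_mul, EuclideanSpace.single_apply]
    by_cases h : k = i
    · subst h; simp [hij, hij.symm]; try ring
    · by_cases h' : k = j
      · subst h'; simp [h, hij, hij.symm]; try ring
      · simp [h, h']
  rw [hcurve, ← heq]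
  exact hd

open scoped RealInnerProductSpace

lemma sum_sq_eq_one (x : E m) (hx : ‖x‖ = 1) : ∑ k, x k ^ 2 = 1 := by
  have h : ⟪x, x⟫ = (1:ℝ) := by rw [real_inner_self_eq_norm_sq, hx]; norm_num
  rw [PiLp.inner_apply] at h
  simpa [RCLike.inner_apply, conj_trivial, sq] using h

lemma integral_cs {α : Type*} [MeasurableSpace α] (μ : Measure α)
    (f g : α → ℝ) (hf : Integrable (fun a => f a ^ 2) μ)
    (hg : Integrable (fun a => g a ^ 2) μ) (hfg : Integrable (fun a => f a * g a) μ) :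
    (∫ a, f a * g a ∂μ) ^ 2 ≤ (∫ a, f a ^ 2 ∂μ) * ∫ a, g a ^ 2 ∂μ := by
  set A := ∫ a, f a ^ 2 ∂μ with hA
  set B := ∫ a, f a * g a ∂μ with hB
  set C := ∫ a, g a ^ 2 ∂μ with hC
  have key : ∀ lam : ℝ, 0 ≤ A - 2 * lam * B + lam ^ 2 * C := by
    intro lam
    have h0 : 0 ≤ ∫ a, (f a - lam * g a) ^ 2 ∂μ := integral_nonneg fun a => sq_nonneg _
    have i1 : Integrable (fun a => f a ^ 2 - 2 * lam * (f a * g a)) μ :=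
      hf.sub (hfg.const_mul _)
    have i2 : Integrable (fun a => lam ^ 2 * g a ^ 2) μ := hg.const_mul _
    have he : ∫ a, (f a - lam * g a) ^ 2 ∂μ = A - 2 * lam * B + lam ^ 2 * C := by
      have hfun : (fun a => (f a - lam * g a) ^ 2)
          = fun a => (f a ^ 2 - 2 * lam * (f a * g a)) + lam ^ 2 * g a ^ 2 := by
        funext a; ring
      rw [hfun, integral_add i1 i2, integral_sub hf (hfg.const_mul _),
        integral_const_mul, integral_const_mul]
    rw [he] at h0
    exact h0
  have hA0 : 0 ≤ A := integral_nonneg fun a => sq_nonneg _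
  have hC0 : 0 ≤ C := integral_nonneg fun a => sq_nonneg _
  rcases eq_or_lt_of_le hC0 with hCz | hCp
  · by_contra hcon
    push_neg at hcon
    have hB0 : B ≠ 0 := by
      intro h
      rw [h] at hcon
      nlinarith
    have h1 := key ((A + 1) / (2 * B))
    have e1 : 2 * ((A + 1) / (2 * B)) * B = A + 1 := by field_simp
    rw [← hCz, e1] at h1
    linarith [h1]
  · have hne : C ≠ 0 := ne_of_gt hCp
    have h1 := key (B / C)
    have e1 : 2 * (B / C) * B = 2 * (B ^ 2 / C) := by ring
    have e2 : (B / C) ^ 2 * C = B ^ 2 / C := by field_simp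
    rw [e1, e2] at h1
    have h2 : B ^ 2 / C ≤ A := by linarith
    calc B ^ 2 = B ^ 2 / C * C := by field_simp
    _ ≤ A * C := mul_le_mul_of_nonneg_right h2 hC0


lemma sum_wv (i : Fin m) (x : E m) (hx : ‖x‖ = 1) :
    ∑ j ∈ Finset.univ.erase i, x j • wv i j x
      = EuclideanSpace.single i (1:ℝ) - x i • x := by
  ext k
  have hsum : (∑ j ∈ Finset.univ.erase i, x j • wv i j x) k
      = ∑ j ∈ Finset.univ.erase i, x j * wv i j x k := by
    rw [WithLp.ofLp_sum, Finset.sum_apply k _ _]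
    rfl
  rw [hsum]
  have hrhs : (EuclideanSpace.single i (1:ℝ) - x i • x) k
      = (if k = i then 1 else 0) - x i * x k := by
    simp [PiLp.sub_apply, PiLp.smul_apply, EuclideanSpace.single_apply, smul_eq_mul]
  rw [hrhs]
  by_cases h : k = i
  · subst h
    have : ∀ j ∈ Finset.univ.erase k, x j * wv k j x k = x j ^ 2 := by
      intro j hj
      rcases Finset.mem_erase.1 hj with ⟨hjk, -⟩
      rw [wv_apply]
      simp [hjk.symm]
      ring
    rw [Finset.sum_congr rfl this]
    have h2 : ∑ j ∈ Finset.univ.erase k, x j ^ 2 = 1 - x k ^ 2 := by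
      have h3 := Finset.sum_erase_add Finset.univ (fun j => x j ^ 2) (Finset.mem_univ k)
      rw [sum_sq_eq_one x hx] at h3
      have h4 : (∑ j ∈ Finset.univ.erase k, x j ^ 2) + x k ^ 2 = 1 := by simpa using h3
      linarith
    rw [h2]
    simp
    ring
  · have : ∀ j ∈ Finset.univ.erase i, x j * wv i j x k
        = if j = k then -(x i * x k) else 0 := by
      intro j hj
      rcases Finset.mem_erase.1 hj with ⟨hji, -⟩
      rw [wv_apply]
      by_cases h' : j = k
      · subst h'
        simp [h, hji.symm]
        ring
      · rw [if_neg h, if_neg (fun hh : k = j => h' hh.symm), if_neg h']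
        ring
    rw [Finset.sum_congr rfl this, Finset.sum_ite_eq' _ k _]
    have hk : k ∈ Finset.univ.erase i := Finset.mem_erase.2 ⟨h, Finset.mem_univ k⟩
    simp [hk, h]

lemma sum_coord (v x : E m) :
    ∑ i, v i • (EuclideanSpace.single i (1:ℝ) - x i • x) = v - ⟪x, v⟫ • x := by
  ext k
  have hsum : (∑ i, v i • (EuclideanSpace.single i (1:ℝ) - x i • x)) k
      = ∑ i, v i * ((if k = i then 1 else 0) - x i * x k) := by
    rw [WithLp.ofLp_sum, Finset.sum_apply k _ _]
    apply Finset.sum_congr rfl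
    intro i _
    simp [PiLp.sub_apply, PiLp.smul_apply, EuclideanSpace.single_apply, smul_eq_mul]
  rw [hsum]
  have hinner : ⟪x, v⟫ = ∑ i, x i * v i := by
    simp [PiLp.inner_apply, RCLike.inner_apply, conj_trivial, mul_comm]
  have hrhs : (v - ⟪x, v⟫ • x) k = v k - (∑ i, x i * v i) * x k := by
    simp [PiLp.sub_apply, PiLp.smul_apply, smul_eq_mul, hinner]
  rw [hrhs]
  have : ∀ i, v i * ((if k = i then 1 else 0) - x i * x k)
      = (if i = k then v k else 0) - (x i * v i) * x k := by
    intro i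
    by_cases h : i = k
    · subst h
      simp
      ring
    · rw [if_neg (fun hh : k = i => h hh.symm), if_neg h]
      ring
  rw [Finset.sum_congr rfl fun i _ => this i]
  rw [Finset.sum_sub_distrib, Finset.sum_ite_eq' _ k _]
  simp [Finset.sum_mul]

end SUP
open SUP
open scoped RealInnerProductSpace

set_option maxHeartbeats 2000000 in
/-- The uncertainty principle on `S^n` (the weak form of the Goh–Goodman theorem):
for a non-zero `C¹` function `F` on the sphere (realized as a degree-`0` homogeneous
function on `ℝ^{n+1} \ {0}`, so that its surface gradient at points of the sphere is
`fderiv ℝ F`), with `μ` the normalized rotation-invariant measure on `S^n`,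
`√(‖F‖₂² - ‖∫ x|F|²dσ‖²/‖F‖₂²) · ‖∇F‖₂ ≥ (n/2)·‖∫ x|F|²dσ‖`. -/
theorem spherical_uncertainty_principle (n : ℕ) (hn : 1 ≤ n)
    (μ : Measure (sphere (0 : EuclideanSpace ℝ (Fin (n + 1))) 1))
    [IsProbabilityMeasure μ]
    (hinv : ∀ g : EuclideanSpace ℝ (Fin (n + 1)) ≃ₗᵢ[ℝ] EuclideanSpace ℝ (Fin (n + 1)),
      Measure.map
        (fun x : sphere (0 : EuclideanSpace ℝ (Fin (n + 1))) 1 =>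
          (⟨g x.1, by
            have hx := x.2
            simp only [mem_sphere_iff_norm, sub_zero] at hx ⊢
            rw [g.norm_map]; exact hx⟩ :
            sphere (0 : EuclideanSpace ℝ (Fin (n + 1))) 1)) μ = μ)
    (F : EuclideanSpace ℝ (Fin (n + 1)) → ℝ)
    (hhom : ∀ c : ℝ, 0 < c → ∀ x, F (c • x) = F x)
    (hC1 : ContDiffOn ℝ 1 F {(0 : EuclideanSpace ℝ (Fin (n + 1)))}ᶜ)
    (hF0 : (∫ x, F x.1 ^ 2 ∂μ) ≠ 0) :
    Real.sqrt ((∫ x, F x.1 ^ 2 ∂μ) -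
          ‖∫ x, F x.1 ^ 2 • (x.1 : EuclideanSpace ℝ (Fin (n + 1))) ∂μ‖ ^ 2 /
            ∫ x, F x.1 ^ 2 ∂μ) *
        Real.sqrt (∫ x, ‖fderiv ℝ F x.1‖ ^ 2 ∂μ) ≥
      (n : ℝ) / 2 * ‖∫ x, F x.1 ^ 2 • (x.1 : EuclideanSpace ℝ (Fin (n + 1))) ∂μ‖ := by
  classical
  -- basic facts about sphere points
  have hx1 : ∀ x : sphere (0 : EuclideanSpace ℝ (Fin (n + 1))) 1,
      ‖(x.1 : EuclideanSpace ℝ (Fin (n + 1)))‖ = 1 := fun x => by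
    have hx := x.2
    rwa [mem_sphere_iff_norm, sub_zero] at hx
  have hxne : ∀ x : sphere (0 : EuclideanSpace ℝ (Fin (n + 1))) 1, x.1 ≠ 0 := fun x h => by
    have := hx1 x; rw [h] at this; simp at this
  have hxmem : ∀ x : sphere (0 : EuclideanSpace ℝ (Fin (n + 1))) 1,
      x.1 ∈ ({(0 : EuclideanSpace ℝ (Fin (n + 1)))}ᶜ : Set _) := fun x =>
    Set.mem_compl_singleton_iff.2 (hxne x)
  have hFc : ContinuousOn F {(0 : EuclideanSpace ℝ (Fin (n + 1)))}ᶜ := hC1.continuousOn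
  have hF'c : ContinuousOn (fderiv ℝ F) {(0 : EuclideanSpace ℝ (Fin (n + 1)))}ᶜ :=
    hC1.continuousOn_fderiv_of_isOpen isOpen_compl_singleton le_rfl
  have hcoe : Continuous fun x : sphere (0 : EuclideanSpace ℝ (Fin (n + 1))) 1 =>
      (x.1 : EuclideanSpace ℝ (Fin (n + 1))) := continuous_subtype_val
  have hContF : Continuous fun x : sphere (0 : EuclideanSpace ℝ (Fin (n + 1))) 1 => F x.1 :=
    hFc.comp_continuous hcoe hxmem
  have hContDF : Continuous fun x : sphere (0 : EuclideanSpace ℝ (Fin (n + 1))) 1 =>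
      fderiv ℝ F x.1 := hF'c.comp_continuous hcoe hxmem
  -- integrability of continuous functions on the sphere
  have hInt : ∀ {X : Type} [NormedAddCommGroup X]
      (f : sphere (0 : EuclideanSpace ℝ (Fin (n + 1))) 1 → X), Continuous f →
      Integrable f μ := fun f hf =>
    hf.integrable_of_hasCompactSupport (HasCompactSupport.of_compactSpace f)
  -- uniform bounds on F and its derivative on the sphere
  obtain ⟨M, hM0, hMF, hMDF⟩ : ∃ M : ℝ, 0 ≤ M ∧
      (∀ y : EuclideanSpace ℝ (Fin (n + 1)), ‖y‖ = 1 → |F y| ≤ M) ∧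
      (∀ y : EuclideanSpace ℝ (Fin (n + 1)), ‖y‖ = 1 → ‖fderiv ℝ F y‖ ≤ M) := by
    have hK : IsCompact (sphere (0 : EuclideanSpace ℝ (Fin (n + 1))) 1 : Set _) :=
      isCompact_sphere _ _
    have hsub : (sphere (0 : EuclideanSpace ℝ (Fin (n + 1))) 1 : Set _)
        ⊆ {(0 : EuclideanSpace ℝ (Fin (n + 1)))}ᶜ := fun y hy => by
      simp only [mem_sphere_iff_norm, sub_zero] at hy
      intro h0
      rw [Set.mem_singleton_iff] at h0
      rw [h0] at hy; simp at hy
    obtain ⟨M1, hM1⟩ := hK.exists_bound_of_continuousOn (hFc.mono hsub)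
    obtain ⟨M2, hM2⟩ := hK.exists_bound_of_continuousOn (hF'c.mono hsub)
    refine ⟨max 0 (max M1 M2), le_max_left _ _, fun y hy => ?_, fun y hy => ?_⟩
    · have := hM1 y (by simpa [mem_sphere_iff_norm] using hy)
      rw [Real.norm_eq_abs] at this
      exact this.trans (le_max_of_le_right (le_max_left _ _))
    · exact (hM2 y (by simpa [mem_sphere_iff_norm] using hy)).trans
        (le_max_of_le_right (le_max_right _ _))
  -- the key integration-by-parts identity, from rotation invariance
  have key : ∀ i j : Fin (n + 1), i ≠ j →
      ∫ x, F x.1 ^ 2 * x.1 i ∂μ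
        = 2 * ∫ x, F x.1 * fderiv ℝ F x.1 (wv i j x.1) * x.1 j ∂μ := by
    intro i j hij
    have hrotS : ∀ (t : ℝ) (x : sphere (0 : EuclideanSpace ℝ (Fin (n + 1))) 1),
        ‖rotL i j t x.1‖ = 1 := fun t x => by rw [norm_rotL i j hij, hx1]
    have hrotne : ∀ (t : ℝ) (x : sphere (0 : EuclideanSpace ℝ (Fin (n + 1))) 1),
        rotL i j t x.1 ≠ 0 := fun t x h => by
      have := hrotS t x; rw [h] at this; simp at this
    have hrotmem : ∀ (t : ℝ) (x : sphere (0 : EuclideanSpace ℝ (Fin (n + 1))) 1),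
        rotL i j t x.1 ∈ ({(0 : EuclideanSpace ℝ (Fin (n + 1)))}ᶜ : Set _) := fun t x =>
      Set.mem_compl_singleton_iff.2 (hrotne t x)
    set Φ : ℝ → sphere (0 : EuclideanSpace ℝ (Fin (n + 1))) 1 → ℝ :=
      fun t x => F (rotL i j t x.1) ^ 2 * rotL i j t x.1 j with hΦ
    set Φ' : ℝ → sphere (0 : EuclideanSpace ℝ (Fin (n + 1))) 1 → ℝ := fun t x =>
      2 * F (rotL i j t x.1) * fderiv ℝ F (rotL i j t x.1) (wv i j (rotL i j t x.1))
          * rotL i j t x.1 j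
        + F (rotL i j t x.1) ^ 2 * wv i j (rotL i j t x.1) j with hΦ'
    have hContRot : ∀ t : ℝ, Continuous fun x : sphere
        (0 : EuclideanSpace ℝ (Fin (n + 1))) 1 => rotL i j t x.1 :=
      fun t => (rotL i j t).continuous_of_finiteDimensional.comp hcoe
    have hContΦ : ∀ t, Continuous (Φ t) := by
      intro t
      have h1 : Continuous fun x : sphere (0 : EuclideanSpace ℝ (Fin (n + 1))) 1 =>
          F (rotL i j t x.1) := hFc.comp_continuous (hContRot t) (hrotmem t)
      exact (h1.pow 2).mul ((EuclideanSpace.proj j).continuous.comp (hContRot t))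
    have hContΦ' : ∀ t, Continuous (Φ' t) := by
      intro t
      have h1 : Continuous fun x : sphere (0 : EuclideanSpace ℝ (Fin (n + 1))) 1 =>
          F (rotL i j t x.1) := hFc.comp_continuous (hContRot t) (hrotmem t)
      have h2 : Continuous fun x : sphere (0 : EuclideanSpace ℝ (Fin (n + 1))) 1 =>
          fderiv ℝ F (rotL i j t x.1) := hF'c.comp_continuous (hContRot t) (hrotmem t)
      have h3 : Continuous fun x : sphere (0 : EuclideanSpace ℝ (Fin (n + 1))) 1 =>
          wv i j (rotL i j t x.1) := by
        apply Continuous.sub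
        · exact ((EuclideanSpace.proj j).continuous.comp (hContRot t)).smul continuous_const
        · exact ((EuclideanSpace.proj i).continuous.comp (hContRot t)).smul continuous_const
      exact ((((continuous_const.mul h1).mul (h2.clm_apply h3)).mul
        ((EuclideanSpace.proj j).continuous.comp (hContRot t)))).add
        ((h1.pow 2).mul ((EuclideanSpace.proj j).continuous.comp h3))
    have hDeriv : ∀ (x : sphere (0 : EuclideanSpace ℝ (Fin (n + 1))) 1) (t : ℝ),
        HasDerivAt (fun s => Φ s x) (Φ' t x) t := by
      intro x t
      have hc : HasDerivAt (fun s => rotL i j s x.1) (wv i j (rotL i j t x.1)) t :=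
        hasDerivAt_rotL i j hij x.1 t
      have hdF : HasFDerivAt F (fderiv ℝ F (rotL i j t x.1)) (rotL i j t x.1) := by
        have hd : DifferentiableAt ℝ F (rotL i j t x.1) :=
          (hC1.differentiableOn one_ne_zero).differentiableAt
            (IsOpen.mem_nhds isOpen_compl_singleton (hrotmem t x))
        exact hd.hasFDerivAt
      have h1 : HasDerivAt (fun s => F (rotL i j s x.1))
          (fderiv ℝ F (rotL i j t x.1) (wv i j (rotL i j t x.1))) t :=
        hdF.comp_hasDerivAt t hc
      have h2 : HasDerivAt (fun s => rotL i j s x.1 j) (wv i j (rotL i j t x.1) j) t := by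
        have := (EuclideanSpace.proj j (𝕜 := ℝ)).hasFDerivAt.comp_hasDerivAt t hc
        exact this
      have h3 : HasDerivAt (fun s => Φ s x) _ t := (h1.pow 2).mul h2
      convert h3 using 1
      simp only [hΦ', Pi.pow_apply]
      push_cast
      ring
    have hbound : ∀ (x : sphere (0 : EuclideanSpace ℝ (Fin (n + 1))) 1) (t : ℝ),
        |Φ' t x| ≤ 6 * M ^ 2 := by
      intro x t
      set y := rotL i j t x.1 with hy
      have hy1 : ‖y‖ = 1 := hrotS t x
      have b1 : |F y| ≤ M := hMF y hy1
      have b2 : ‖fderiv ℝ F y‖ ≤ M := hMDF y hy1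
      have b3 : |y j| ≤ 1 := by rw [← hy1]; exact coord_le y j
      have b4 : ‖wv i j y‖ ≤ 2 := by
        have := norm_wv_le i j y; rw [hy1] at this; linarith
      have b5 : |wv i j y j| ≤ 2 := le_trans (coord_le _ j) b4
      have b6 : |fderiv ℝ F y (wv i j y)| ≤ 2 * M := by
        have h := (fderiv ℝ F y).le_opNorm (wv i j y)
        rw [Real.norm_eq_abs] at h
        calc |fderiv ℝ F y (wv i j y)| ≤ ‖fderiv ℝ F y‖ * ‖wv i j y‖ := h
        _ ≤ M * 2 := mul_le_mul b2 b4 (norm_nonneg _) hM0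
        _ = 2 * M := by ring
      have c1 : |2 * F y * fderiv ℝ F y (wv i j y) * y j| ≤ 4 * M ^ 2 := by
        rw [abs_mul, abs_mul, abs_mul, abs_two]
        have e1 : |F y| * |fderiv ℝ F y (wv i j y)| ≤ M * (2 * M) :=
          mul_le_mul b1 b6 (abs_nonneg _) hM0
        have e2 : 2 * |F y| * |fderiv ℝ F y (wv i j y)| * |y j|
            ≤ 2 * (M * (2 * M)) * 1 := by
          apply mul_le_mul _ b3 (abs_nonneg _)
          · positivity
          · nlinarith [abs_nonneg (F y), abs_nonneg (fderiv ℝ F y (wv i j y))]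
        nlinarith
      have c2 : |F y ^ 2 * wv i j y j| ≤ 2 * M ^ 2 := by
        rw [abs_mul, abs_pow]
        have e1 : |F y| ^ 2 ≤ M ^ 2 := by nlinarith [abs_nonneg (F y)]
        nlinarith [abs_nonneg (wv i j y j), sq_nonneg (F y), abs_nonneg (F y),
          sq_abs (F y)]
      calc |Φ' t x| ≤ |2 * F y * fderiv ℝ F y (wv i j y) * y j| + |F y ^ 2 * wv i j y j| :=
        abs_add_le _ _
      _ ≤ 6 * M ^ 2 := by linarith
    obtain ⟨-, hHD⟩ := hasDerivAt_integral_of_dominated_loc_of_deriv_le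
      (μ := μ) (F := Φ) (F' := Φ') (x₀ := (0:ℝ)) (bound := fun _ => 6 * M ^ 2) (Metric.ball_mem_nhds (0:ℝ) one_pos)
      (Filter.Eventually.of_forall fun t => (hContΦ t).aestronglyMeasurable)
      (hInt _ (hContΦ 0)) ((hContΦ' 0).aestronglyMeasurable)
      (Filter.Eventually.of_forall fun x => fun t _ => by
        rw [Real.norm_eq_abs]; exact hbound x t)
      (integrable_const _)
      (Filter.Eventually.of_forall fun x => fun t _ => hDeriv x t)
    -- the integral is constant in t by rotation invariance
    have hconst : ∀ t : ℝ, ∫ x, Φ t x ∂μ = ∫ x, Φ 0 x ∂μ := by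
      intro t
      have hmapeq := hinv (rot i j hij t)
      have hH : Continuous fun z : sphere (0 : EuclideanSpace ℝ (Fin (n + 1))) 1 =>
          F z.1 ^ 2 * z.1 j :=
        (hContF.pow 2).mul ((EuclideanSpace.proj j).continuous.comp hcoe)
      have h0 : ∫ x, Φ 0 x ∂μ = ∫ x, F x.1 ^ 2 * x.1 j ∂μ := by
        apply integral_congr_ae
        filter_upwards with x
        simp only [hΦ, rotL_zero]
      rw [h0]
      have hgcont : Continuous fun x : sphere (0 : EuclideanSpace ℝ (Fin (n + 1))) 1 =>
          (rot i j hij t) x.1 := (rot i j hij t).continuous.comp hcoe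
      conv_rhs => rw [← hmapeq]
      rw [integral_map (hgcont.subtype_mk _).aemeasurable
        (by rw [hmapeq]; exact hH.aestronglyMeasurable)]
      apply integral_congr_ae
      filter_upwards with x
      rfl
    have hc0 : HasDerivAt (fun t => ∫ x, Φ t x ∂μ) 0 0 := by
      have he : (fun t => ∫ x, Φ t x ∂μ) = fun _ => ∫ x, Φ 0 x ∂μ := funext hconst
      rw [he]; exact hasDerivAt_const _ _
    have hD0 : ∫ x, Φ' 0 x ∂μ = 0 := hHD.unique hc0
    -- unpack the identity at t = 0
    have hwj : ∀ y : EuclideanSpace ℝ (Fin (n + 1)), wv i j y j = -(y i) := by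
      intro y
      rw [wv_apply]
      rw [if_neg hij.symm, if_pos rfl]
      ring
    have hint1 : Integrable (fun x : sphere (0 : EuclideanSpace ℝ (Fin (n + 1))) 1 =>
        2 * (F x.1 * fderiv ℝ F x.1 (wv i j x.1) * x.1 j)) μ := by
      apply hInt
      have h3 : Continuous fun x : sphere (0 : EuclideanSpace ℝ (Fin (n + 1))) 1 =>
          wv i j x.1 := by
        apply Continuous.sub
        · exact ((EuclideanSpace.proj j).continuous.comp hcoe).smul continuous_const
        · exact ((EuclideanSpace.proj i).continuous.comp hcoe).smul continuous_const
      exact continuous_const.mul ((hContF.mul (hContDF.clm_apply h3)).mul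
        ((EuclideanSpace.proj j).continuous.comp hcoe))
    have hint2 : Integrable (fun x : sphere (0 : EuclideanSpace ℝ (Fin (n + 1))) 1 =>
        F x.1 ^ 2 * x.1 i) μ := by
      apply hInt
      exact (hContF.pow 2).mul ((EuclideanSpace.proj i).continuous.comp hcoe)
    have hsplit : ∫ x, (2 * (F x.1 * fderiv ℝ F x.1 (wv i j x.1) * x.1 j)
        - F x.1 ^ 2 * x.1 i) ∂μ = 0 := by
      rw [← hD0]
      apply integral_congr_ae
      filter_upwards with x
      simp only [hΦ', rotL_zero, hwj]
      ring
    rw [integral_sub hint1 hint2, integral_const_mul] at hsplit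
    linarith
  -- sum the key identity over j ≠ i
  have h3' : ∀ i j : Fin (n + 1), Continuous
      fun x : sphere (0 : EuclideanSpace ℝ (Fin (n + 1))) 1 => wv i j x.1 := by
    intro i j
    apply Continuous.sub
    · exact ((EuclideanSpace.proj j).continuous.comp hcoe).smul continuous_const
    · exact ((EuclideanSpace.proj i).continuous.comp hcoe).smul continuous_const
  have key2 : ∀ i : Fin (n + 1), (n : ℝ) * ∫ x, F x.1 ^ 2 * x.1 i ∂μ
      = 2 * ∫ x, F x.1 * fderiv ℝ F x.1
          (EuclideanSpace.single i 1 - x.1 i • x.1) ∂μ := by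
    intro i
    have hcard : (Finset.univ.erase i).card = n := by
      rw [Finset.card_erase_of_mem (Finset.mem_univ i), Finset.card_univ]
      simp
    have hsum1 : (n : ℝ) * ∫ x, F x.1 ^ 2 * x.1 i ∂μ
        = ∑ j ∈ Finset.univ.erase i, ∫ x, F x.1 ^ 2 * x.1 i ∂μ := by
      rw [Finset.sum_const, hcard, nsmul_eq_mul]
    rw [hsum1]
    have hterm : ∀ j ∈ Finset.univ.erase i, ∫ x, F x.1 ^ 2 * x.1 i ∂μ
        = ∫ x, 2 * (F x.1 * fderiv ℝ F x.1 (x.1 j • wv i j x.1)) ∂μ := by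
      intro j hj
      rcases Finset.mem_erase.1 hj with ⟨hji, -⟩
      rw [key i j (Ne.symm hji), ← integral_const_mul]
      apply integral_congr_ae
      filter_upwards with x
      rw [(fderiv ℝ F x.1).map_smul]
      simp only [smul_eq_mul]
      ring
    rw [Finset.sum_congr rfl hterm, ← integral_finset_sum]
    · rw [← integral_const_mul]
      apply integral_congr_ae
      filter_upwards with x
      rw [← Finset.mul_sum, ← Finset.mul_sum, ← map_sum (fderiv ℝ F x.1) _ _,
        sum_wv i x.1 (hx1 x)]
    · intro j hj
      apply hInt
      exact continuous_const.mul (hContF.mul (hContDF.clm_apply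
        (((EuclideanSpace.proj j).continuous.comp hcoe).smul (h3' i j))))
  -- coordinates of the barycenter vector
  have hIntξ : Integrable (fun x : sphere (0 : EuclideanSpace ℝ (Fin (n + 1))) 1 =>
      F x.1 ^ 2 • x.1) μ := hInt _ ((hContF.pow 2).smul hcoe)
  set ξ : EuclideanSpace ℝ (Fin (n + 1)) := ∫ x, F x.1 ^ 2 • x.1 ∂μ with hξdef
  have hξi : ∀ i, ξ i = ∫ x, F x.1 ^ 2 * x.1 i ∂μ := by
    intro i
    have h := (EuclideanSpace.proj i (𝕜 := ℝ)).integral_comp_comm hIntξ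
    calc ξ i = EuclideanSpace.proj i (𝕜 := ℝ) ξ := rfl
    _ = ∫ x, EuclideanSpace.proj i (𝕜 := ℝ) (F x.1 ^ 2 • x.1) ∂μ := h.symm
    _ = ∫ x, F x.1 ^ 2 * x.1 i ∂μ := by
        apply integral_congr_ae
        filter_upwards with x
        rw [(EuclideanSpace.proj i (𝕜 := ℝ)).map_smul, smul_eq_mul]
        rfl
  -- the vector-valued key identity
  have key3 : (n : ℝ) * ‖ξ‖ ^ 2
      = 2 * ∫ x, F x.1 * fderiv ℝ F x.1 (ξ - ⟪x.1, ξ⟫ • x.1) ∂μ := by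
    have hnorm : ‖ξ‖ ^ 2 = ∑ i, ξ i ^ 2 := by
      rw [← real_inner_self_eq_norm_sq, PiLp.inner_apply]
      simp [PiLp.inner_apply, RCLike.inner_apply, conj_trivial, sq]
    have hterm : ∀ i : Fin (n + 1), (n : ℝ) * ξ i ^ 2
        = ∫ x, 2 * (F x.1 * fderiv ℝ F x.1
            (ξ i • (EuclideanSpace.single i 1 - x.1 i • x.1))) ∂μ := by
      intro i
      have h2 : (n : ℝ) * ξ i = 2 * ∫ x, F x.1 * fderiv ℝ F x.1
          (EuclideanSpace.single i 1 - x.1 i • x.1) ∂μ := by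
        rw [hξi i]; exact key2 i
      calc (n : ℝ) * ξ i ^ 2 = ξ i * ((n : ℝ) * ξ i) := by ring
      _ = ξ i * (2 * ∫ x, F x.1 * fderiv ℝ F x.1
          (EuclideanSpace.single i 1 - x.1 i • x.1) ∂μ) := by rw [h2]
      _ = (ξ i * 2) * ∫ x, F x.1 * fderiv ℝ F x.1
          (EuclideanSpace.single i 1 - x.1 i • x.1) ∂μ := by ring
      _ = ∫ x, (ξ i * 2) * (F x.1 * fderiv ℝ F x.1
          (EuclideanSpace.single i 1 - x.1 i • x.1)) ∂μ := (integral_const_mul _ _).symm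
      _ = ∫ x, 2 * (F x.1 * fderiv ℝ F x.1
          (ξ i • (EuclideanSpace.single i 1 - x.1 i • x.1))) ∂μ := by
          apply integral_congr_ae
          filter_upwards with x
          rw [(fderiv ℝ F x.1).map_smul, smul_eq_mul]
          ring
    calc (n : ℝ) * ‖ξ‖ ^ 2 = ∑ i, (n : ℝ) * ξ i ^ 2 := by rw [hnorm, Finset.mul_sum]
    _ = ∑ i, ∫ x, 2 * (F x.1 * fderiv ℝ F x.1
        (ξ i • (EuclideanSpace.single i 1 - x.1 i • x.1))) ∂μ :=
      Finset.sum_congr rfl fun i _ => hterm i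
    _ = ∫ x, ∑ i, 2 * (F x.1 * fderiv ℝ F x.1
        (ξ i • (EuclideanSpace.single i 1 - x.1 i • x.1))) ∂μ := by
      rw [← integral_finset_sum]
      intro i _
      apply hInt
      exact continuous_const.mul (hContF.mul (hContDF.clm_apply
        (by fun_prop)))
    _ = ∫ x, 2 * (F x.1 * fderiv ℝ F x.1 (ξ - ⟪x.1, ξ⟫ • x.1)) ∂μ := by
      apply integral_congr_ae
      filter_upwards with x
      rw [← Finset.mul_sum, ← Finset.mul_sum, ← map_sum (fderiv ℝ F x.1) _ _,
        sum_coord ξ x.1]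
    _ = 2 * ∫ x, F x.1 * fderiv ℝ F x.1 (ξ - ⟪x.1, ξ⟫ • x.1) ∂μ := integral_const_mul _ _
  -- continuity of the tangential field
  have hu_cont : Continuous fun x : sphere (0 : EuclideanSpace ℝ (Fin (n + 1))) 1 =>
      ξ - ⟪x.1, ξ⟫ • x.1 :=
    by fun_prop
  have hu_norm : ∀ x : sphere (0 : EuclideanSpace ℝ (Fin (n + 1))) 1,
      ‖ξ - ⟪x.1, ξ⟫ • x.1‖ ^ 2 = ‖ξ‖ ^ 2 - ⟪x.1, ξ⟫ ^ 2 := by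
    intro x
    have e1 : ⟪ξ, (⟪x.1, ξ⟫ : ℝ) • x.1⟫ = ⟪x.1, ξ⟫ * ⟪ξ, x.1⟫ := real_inner_smul_right _ _ _
    have e2 : ⟪ξ, x.1⟫ = ⟪x.1, ξ⟫ := real_inner_comm _ _
    have e3 : ‖(⟪x.1, ξ⟫ : ℝ) • x.1‖ = |⟪x.1, ξ⟫| := by
      rw [norm_smul, hx1 x, mul_one, Real.norm_eq_abs]
    rw [norm_sub_sq_real, e1, e2, e3, sq_abs]
    ring
  -- abbreviations
  set I := ∫ x, F x.1 ^ 2 ∂μ with hI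
  set J := ∫ x, ‖fderiv ℝ F x.1‖ ^ 2 ∂μ with hJ
  set K := ∫ x, F x.1 ^ 2 * ⟪x.1, ξ⟫ ^ 2 ∂μ with hK
  set Q := ∫ x, F x.1 * fderiv ℝ F x.1 (ξ - ⟪x.1, ξ⟫ • x.1) ∂μ with hQ
  set P := ∫ x, (|F x.1| * ‖ξ - ⟪x.1, ξ⟫ • x.1‖) * ‖fderiv ℝ F x.1‖ ∂μ with hP
  have hIpos : 0 < I := lt_of_le_of_ne (integral_nonneg fun x => sq_nonneg _) (Ne.symm hF0)
  have hJ0 : 0 ≤ J := integral_nonneg fun x => sq_nonneg _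
  have hP0 : 0 ≤ P := integral_nonneg fun x => by positivity
  -- pointwise bound and Q ≤ P
  have hQP : Q ≤ P := by
    apply integral_mono
    · apply hInt
      exact hContF.mul (hContDF.clm_apply hu_cont)
    · apply hInt
      exact (hContF.abs.mul hu_cont.norm).mul hContDF.norm
    · intro x
      calc F x.1 * fderiv ℝ F x.1 (ξ - ⟪x.1, ξ⟫ • x.1)
          ≤ |F x.1 * fderiv ℝ F x.1 (ξ - ⟪x.1, ξ⟫ • x.1)| := le_abs_self _
      _ = |F x.1| * |fderiv ℝ F x.1 (ξ - ⟪x.1, ξ⟫ • x.1)| := abs_mul _ _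
      _ ≤ |F x.1| * (‖fderiv ℝ F x.1‖ * ‖ξ - ⟪x.1, ξ⟫ • x.1‖) := by
          apply mul_le_mul_of_nonneg_left _ (abs_nonneg _)
          have h := (fderiv ℝ F x.1).le_opNorm (ξ - ⟪x.1, ξ⟫ • x.1)
          rwa [Real.norm_eq_abs] at h
      _ = (|F x.1| * ‖ξ - ⟪x.1, ξ⟫ • x.1‖) * ‖fderiv ℝ F x.1‖ := by ring
  -- Cauchy-Schwarz for P
  have hIntF2 : Integrable (fun x : sphere (0 : EuclideanSpace ℝ (Fin (n + 1))) 1 =>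
      F x.1 ^ 2) μ := hInt _ (hContF.pow 2)
  have hIntK : Integrable (fun x : sphere (0 : EuclideanSpace ℝ (Fin (n + 1))) 1 =>
      F x.1 ^ 2 * ⟪x.1, ξ⟫ ^ 2) μ := hInt _ ((hContF.pow 2).mul
      ((Continuous.inner hcoe continuous_const).pow 2))
  have hfu2 : ∫ x, (|F x.1| * ‖ξ - ⟪x.1, ξ⟫ • x.1‖) ^ 2 ∂μ = ‖ξ‖ ^ 2 * I - K := by
    have hc : ∀ x : sphere (0 : EuclideanSpace ℝ (Fin (n + 1))) 1,
        (|F x.1| * ‖ξ - ⟪x.1, ξ⟫ • x.1‖) ^ 2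
          = ‖ξ‖ ^ 2 * F x.1 ^ 2 - F x.1 ^ 2 * ⟪x.1, ξ⟫ ^ 2 := by
      intro x
      rw [mul_pow, sq_abs, hu_norm x]
      ring
    rw [integral_congr_ae (Filter.Eventually.of_forall hc),
      integral_sub ((hIntF2.const_mul _)) hIntK, integral_const_mul]
  have hcs1 : P ^ 2 ≤ (‖ξ‖ ^ 2 * I - K) * J := by
    rw [← hfu2]
    apply integral_cs
    · apply hInt
      exact ((hContF.abs.mul hu_cont.norm).pow 2)
    · apply hInt
      exact hContDF.norm.pow 2
    · apply hInt
      exact (hContF.abs.mul hu_cont.norm).mul hContDF.norm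
  have hE0 : 0 ≤ ‖ξ‖ ^ 2 * I - K := by
    rw [← hfu2]
    exact integral_nonneg fun x => sq_nonneg _
  -- second Cauchy-Schwarz: K ≥ ‖ξ‖⁴ / I
  have e4 : ∫ x, F x.1 ^ 2 * ⟪x.1, ξ⟫ ∂μ = ‖ξ‖ ^ 2 := by
    have h := integral_inner (𝕜 := ℝ) hIntξ ξ
    rw [real_inner_self_eq_norm_sq] at h
    rw [← h]
    apply integral_congr_ae
    filter_upwards with x
    rw [real_inner_smul_right, real_inner_comm]
  have hcs2 : (‖ξ‖ ^ 2) ^ 2 ≤ K * I := by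
    have h := integral_cs μ (fun x => F x.1 * ⟪x.1, ξ⟫) (fun x => F x.1)
      (hInt _ ((hContF.mul (Continuous.inner hcoe continuous_const)).pow 2))
      (hInt _ (hContF.pow 2))
      (hInt _ ((hContF.mul (Continuous.inner hcoe continuous_const)).mul hContF))
    have e5 : ∫ x, (F x.1 * ⟪x.1, ξ⟫) * F x.1 ∂μ = ‖ξ‖ ^ 2 := by
      rw [← e4]
      apply integral_congr_ae
      filter_upwards with x
      ring
    have e6 : ∫ x, (F x.1 * ⟪x.1, ξ⟫) ^ 2 ∂μ = K := by
      rw [hK]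
      apply integral_congr_ae
      filter_upwards with x
      ring
    rw [e5, e6] at h
    exact h
  -- combine everything
  have hQnn : 0 ≤ (n : ℝ) * ‖ξ‖ ^ 2 := by positivity
  have hfinal : (n : ℝ) * ‖ξ‖ ^ 2
      ≤ 2 * (‖ξ‖ * (Real.sqrt (I - ‖ξ‖ ^ 2 / I) * Real.sqrt J)) := by
    have s1 : P ≤ Real.sqrt (‖ξ‖ ^ 2 * I - K) * Real.sqrt J := by
      rw [← Real.sqrt_sq hP0, ← Real.sqrt_mul hE0]
      exact Real.sqrt_le_sqrt hcs1
    have s2 : ‖ξ‖ ^ 2 * I - K ≤ ‖ξ‖ ^ 2 * (I - ‖ξ‖ ^ 2 / I) := by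
      have hKge : ‖ξ‖ ^ 2 * (‖ξ‖ ^ 2 / I) ≤ K := by
        have he : ‖ξ‖ ^ 2 * (‖ξ‖ ^ 2 / I) = (‖ξ‖ ^ 2) ^ 2 / I := by ring
        rw [he, div_le_iff₀ hIpos]
        linarith [hcs2]
      nlinarith [hKge]
    have s3 : Real.sqrt (‖ξ‖ ^ 2 * I - K)
        ≤ ‖ξ‖ * Real.sqrt (I - ‖ξ‖ ^ 2 / I) := by
      calc Real.sqrt (‖ξ‖ ^ 2 * I - K) ≤ Real.sqrt (‖ξ‖ ^ 2 * (I - ‖ξ‖ ^ 2 / I)) :=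
        Real.sqrt_le_sqrt s2
      _ = ‖ξ‖ * Real.sqrt (I - ‖ξ‖ ^ 2 / I) := by
        rw [Real.sqrt_mul (sq_nonneg _), Real.sqrt_sq (norm_nonneg _)]
    calc (n : ℝ) * ‖ξ‖ ^ 2 = 2 * Q := key3
    _ ≤ 2 * P := by linarith [hQP]
    _ ≤ 2 * (Real.sqrt (‖ξ‖ ^ 2 * I - K) * Real.sqrt J) := by linarith [s1]
    _ ≤ 2 * (‖ξ‖ * (Real.sqrt (I - ‖ξ‖ ^ 2 / I) * Real.sqrt J)) := by
      have := mul_le_mul_of_nonneg_right s3 (Real.sqrt_nonneg J)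
      nlinarith [Real.sqrt_nonneg J]
  rcases eq_or_lt_of_le (norm_nonneg ξ) with hr0 | hrpos
  · rw [ge_iff_le, ← hr0]
    simp
    positivity
  · rw [ge_iff_le]
    have h := hfinal
    rw [sq ‖ξ‖] at h
    nlinarith [h, hrpos, Real.sqrt_nonneg (I - ‖ξ‖ ^ 2 / I), Real.sqrt_nonneg J]
end
end
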